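/- arXiv:2212.10644 — 7 statements merged into one kernel-verified Lean document; each statement's English description precedes it below -/
import Mathlib

section
/- Let N, m, p, σ₁, σ₂ be real numbers with m > 0, let δ ∈ ℝ, θ > 0, C > 0 satisfy the compatibility condition (m-1)δ + 2θ - σ₁ - 2 = 0, and let T > 0. Suppose w : (0,∞) × (0,T) → (0,∞) is differentiable in its second (time) variable, z ↦ w(z,τ)^m is twice differentiable, and w satisfies C ∂_τ w(z,τ) = θ² ∂_zz(w^m)(z,τ) + (θ(2mδ+θ+N-2)/z) ∂_z(w^m)(z,τ) + (mδ(mδ+N-2)/z²) w(z,τ)^m + z^{(σ₂-σ₁+δ(p-1))/θ} w(z,τ)^p for all z > 0, τ ∈ (0,T). Then the function u(r,t) := r^δ w(r^θ, C t) is a classical radial solution of (E)[N,m,p,σ₁,σ₂] on (0,∞) × (0, T/C). -/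
open Real Set

noncomputable section

/-- `u` is a classical radial solution of (E)[N,m,p,σ₁,σ₂] on (0,∞) × I:
`u` is positive, differentiable in time, `r ↦ u(r,t)^m` is twice differentiable in `r`,
and `r^{σ₁} ∂_t u = ∂_rr(u^m) + ((N-1)/r) ∂_r(u^m) + r^{σ₂} u^p` holds pointwise. -/
def IsClassicalRadialSolution (N m p σ₁ σ₂ : ℝ) (I : Set ℝ) (u : ℝ → ℝ → ℝ) : Prop :=
  ∀ r : ℝ, 0 < r → ∀ t ∈ I,
    0 < u r t ∧
    DifferentiableAt ℝ (fun τ => u r τ) t ∧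
    DifferentiableAt ℝ (fun ρ => u ρ t ^ m) r ∧
    DifferentiableAt ℝ (deriv (fun ρ => u ρ t ^ m)) r ∧
    r ^ σ₁ * deriv (fun τ => u r τ) t =
      deriv (deriv (fun ρ => u ρ t ^ m)) r
        + ((N - 1) / r) * deriv (fun ρ => u ρ t ^ m) r
        + r ^ σ₂ * u r t ^ p

lemma rpow_add_eq {r : ℝ} (hr : 0 < r) {a b c : ℝ} (h : a + b = c) :
    r ^ a * r ^ b = r ^ c := by rw [← Real.rpow_add hr, h]

lemma aux_space (m δ θ : ℝ) (v : ℝ → ℝ)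
    (hv : ∀ ζ : ℝ, 0 < ζ → 0 < v ζ)
    (hg1 : ∀ ζ : ℝ, 0 < ζ → DifferentiableAt ℝ (fun ζ' => v ζ' ^ m) ζ)
    (r : ℝ) (hr : 0 < r)
    (hg2 : DifferentiableAt ℝ (deriv (fun ζ' => v ζ' ^ m)) (r ^ θ)) :
    DifferentiableAt ℝ (fun ρ => (ρ ^ δ * v (ρ ^ θ)) ^ m) r ∧
    DifferentiableAt ℝ (deriv (fun ρ => (ρ ^ δ * v (ρ ^ θ)) ^ m)) r ∧
    deriv (fun ρ => (ρ ^ δ * v (ρ ^ θ)) ^ m) r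
      = m * δ * r ^ (m * δ - 1) * v (r ^ θ) ^ m
        + θ * r ^ (m * δ + θ - 1) * deriv (fun ζ' => v ζ' ^ m) (r ^ θ) ∧
    deriv (deriv (fun ρ => (ρ ^ δ * v (ρ ^ θ)) ^ m)) r
      = m * δ * (m * δ - 1) * r ^ (m * δ - 2) * v (r ^ θ) ^ m
        + θ * (2 * m * δ + θ - 1) * r ^ (m * δ + θ - 2) * deriv (fun ζ' => v ζ' ^ m) (r ^ θ)
        + θ ^ 2 * r ^ (m * δ + 2 * θ - 2) * deriv (deriv (fun ζ' => v ζ' ^ m)) (r ^ θ) := by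
  have hueq : ∀ ρ : ℝ, 0 < ρ →
      (fun ρ' => (ρ' ^ δ * v (ρ' ^ θ)) ^ m)
        =ᶠ[nhds ρ] (fun ρ' => ρ' ^ (m * δ) * v (ρ' ^ θ) ^ m) := by
    intro ρ hρ
    filter_upwards [Ioi_mem_nhds hρ] with x hx
    have hx0 : (0:ℝ) < x := hx
    rw [Real.mul_rpow (Real.rpow_nonneg hx0.le δ)
        (hv _ (Real.rpow_pos_of_pos hx0 θ)).le, ← Real.rpow_mul hx0.le, mul_comm δ m]
  have hFd : ∀ ρ : ℝ, 0 < ρ → HasDerivAt (fun ρ' => ρ' ^ (m * δ) * v (ρ' ^ θ) ^ m)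
      (m * δ * ρ ^ (m * δ - 1) * v (ρ ^ θ) ^ m
        + θ * ρ ^ (m * δ + θ - 1) * deriv (fun ζ' => v ζ' ^ m) (ρ ^ θ)) ρ := by
    intro ρ hρ
    have hρθ : (0:ℝ) < ρ ^ θ := Real.rpow_pos_of_pos hρ θ
    have h1 : HasDerivAt (fun x : ℝ => x ^ (m * δ)) (m * δ * ρ ^ (m * δ - 1)) ρ :=
      Real.hasDerivAt_rpow_const (Or.inl hρ.ne')
    have hθd : HasDerivAt (fun x : ℝ => x ^ θ) (θ * ρ ^ (θ - 1)) ρ :=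
      Real.hasDerivAt_rpow_const (Or.inl hρ.ne')
    have h2 : HasDerivAt (fun x : ℝ => v (x ^ θ) ^ m)
        (deriv (fun ζ' => v ζ' ^ m) (ρ ^ θ) * (θ * ρ ^ (θ - 1))) ρ :=
      by have := ((hg1 _ hρθ).hasDerivAt).comp ρ hθd; exact this
    have h3 := h1.mul h2
    have e : ρ ^ (m * δ) * ρ ^ (θ - 1) = ρ ^ (m * δ + θ - 1) := rpow_add_eq hρ (by ring)
    refine h3.congr_deriv ?_
    linear_combination (θ * deriv (fun ζ' => v ζ' ^ m) (ρ ^ θ)) * e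
  have hrθ : (0:ℝ) < r ^ θ := Real.rpow_pos_of_pos hr θ
  have hθdr : HasDerivAt (fun x : ℝ => x ^ θ) (θ * r ^ (θ - 1)) r :=
    Real.hasDerivAt_rpow_const (Or.inl hr.ne')
  have hA : HasDerivAt (fun x : ℝ => m * δ * x ^ (m * δ - 1))
      (m * δ * ((m * δ - 1) * r ^ (m * δ - 1 - 1))) r :=
    (Real.hasDerivAt_rpow_const (Or.inl hr.ne')).const_mul (m * δ)
  have hB : HasDerivAt (fun x : ℝ => v (x ^ θ) ^ m)
      (deriv (fun ζ' => v ζ' ^ m) (r ^ θ) * (θ * r ^ (θ - 1))) r :=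
    by have := ((hg1 _ hrθ).hasDerivAt).comp r hθdr; exact this
  have hB2 : HasDerivAt (fun x : ℝ => deriv (fun ζ' => v ζ' ^ m) (x ^ θ))
      (deriv (deriv (fun ζ' => v ζ' ^ m)) (r ^ θ) * (θ * r ^ (θ - 1))) r :=
    by have := (hg2.hasDerivAt).comp r hθdr; exact this
  have hC2 : HasDerivAt (fun x : ℝ => θ * x ^ (m * δ + θ - 1))
      (θ * ((m * δ + θ - 1) * r ^ (m * δ + θ - 1 - 1))) r :=
    (Real.hasDerivAt_rpow_const (Or.inl hr.ne')).const_mul θ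
  have hGnd := (hA.mul hB).add (hC2.mul hB2)
  have hd2ev : deriv (fun ρ' => (ρ' ^ δ * v (ρ' ^ θ)) ^ m)
      =ᶠ[nhds r] (fun ρ' => m * δ * ρ' ^ (m * δ - 1) * v (ρ' ^ θ) ^ m
        + θ * ρ' ^ (m * δ + θ - 1) * deriv (fun ζ' => v ζ' ^ m) (ρ' ^ θ)) := by
    filter_upwards [Ioi_mem_nhds hr] with x hx
    have hx0 : (0:ℝ) < x := hx
    exact ((hueq x hx0).deriv_eq).trans (hFd x hx0).deriv
  refine ⟨(hueq r hr).differentiableAt_iff.mpr (hFd r hr).differentiableAt,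
    hd2ev.differentiableAt_iff.mpr hGnd.differentiableAt,
    ((hueq r hr).deriv_eq).trans (hFd r hr).deriv, ?_⟩
  have h := hd2ev.deriv_eq.trans hGnd.deriv
  rw [h]
  have e1 : r ^ (m * δ - 1) * r ^ (θ - 1) = r ^ (m * δ + θ - 2) := rpow_add_eq hr (by ring)
  have e2 : r ^ (m * δ + θ - 1) * r ^ (θ - 1) = r ^ (m * δ + 2 * θ - 2) := rpow_add_eq hr (by ring)
  have e3 : r ^ (m * δ - 1 - 1) = r ^ (m * δ - 2) := by congr 1; ring
  have e4 : r ^ (m * δ + θ - 1 - 1) = r ^ (m * δ + θ - 2) := by congr 1; ring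
  rw [e3, e4]
  linear_combination (θ * m * δ * deriv (fun ζ' => v ζ' ^ m) (r ^ θ)) * e1
    + (θ ^ 2 * deriv (deriv (fun ζ' => v ζ' ^ m)) (r ^ θ)) * e2

theorem statement0 (N m p σ₁ σ₂ δ θ C T : ℝ) (hm : 0 < m) (hθ : 0 < θ) (hC : 0 < C)
    (hcomp : (m - 1) * δ + 2 * θ - σ₁ - 2 = 0) (hT : 0 < T)
    (w : ℝ → ℝ → ℝ)
    (hpos : ∀ z : ℝ, 0 < z → ∀ τ ∈ Ioo (0:ℝ) T, 0 < w z τ)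
    (hdt : ∀ z : ℝ, 0 < z → ∀ τ ∈ Ioo (0:ℝ) T,
      DifferentiableAt ℝ (fun τ' => w z τ') τ)
    (hdz : ∀ z : ℝ, 0 < z → ∀ τ ∈ Ioo (0:ℝ) T,
      DifferentiableAt ℝ (fun ζ => w ζ τ ^ m) z ∧
      DifferentiableAt ℝ (deriv (fun ζ => w ζ τ ^ m)) z)
    (heq : ∀ z : ℝ, 0 < z → ∀ τ ∈ Ioo (0:ℝ) T,
      C * deriv (fun τ' => w z τ') τ =
        θ ^ 2 * deriv (deriv (fun ζ => w ζ τ ^ m)) z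
          + (θ * (2 * m * δ + θ + N - 2) / z) * deriv (fun ζ => w ζ τ ^ m) z
          + (m * δ * (m * δ + N - 2) / z ^ 2) * w z τ ^ m
          + z ^ ((σ₂ - σ₁ + δ * (p - 1)) / θ) * w z τ ^ p) :
    IsClassicalRadialSolution N m p σ₁ σ₂ (Ioo 0 (T / C))
      (fun r t => r ^ δ * w (r ^ θ) (C * t)) := by
  intro r hr t ht
  have hz : (0:ℝ) < r ^ θ := Real.rpow_pos_of_pos hr θ
  have hτmem : C * t ∈ Ioo (0:ℝ) T :=
    ⟨mul_pos hC ht.1, by rw [mul_comm]; exact (lt_div_iff₀ hC).mp ht.2⟩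
  have hW : 0 < w (r ^ θ) (C * t) := hpos _ hz _ hτmem
  obtain ⟨hd1, hd2, he1, he2⟩ := aux_space m δ θ (fun ζ => w ζ (C * t))
      (fun ζ hζ => hpos ζ hζ _ hτmem)
      (fun ζ hζ => (hdz ζ hζ _ hτmem).1) r hr ((hdz _ hz _ hτmem).2)
  beta_reduce at hd1 hd2 he1 he2
  have hCt : HasDerivAt (fun t' : ℝ => C * t') C t := by
    simpa using (hasDerivAt_id t).const_mul C
  have hts : HasDerivAt (fun t' : ℝ => w (r ^ θ) (C * t'))
      (deriv (fun τ' => w (r ^ θ) τ') (C * t) * C) t :=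
    ((hdt _ hz _ hτmem).hasDerivAt).comp t hCt
  have htfull : HasDerivAt (fun t' : ℝ => r ^ δ * w (r ^ θ) (C * t'))
      (r ^ δ * (deriv (fun τ' => w (r ^ θ) τ') (C * t) * C)) t := hts.const_mul _
  refine ⟨mul_pos (Real.rpow_pos_of_pos hr δ) hW, htfull.differentiableAt, hd1, hd2, ?_⟩
  beta_reduce
  rw [htfull.deriv, he1, he2]
  -- algebraic identities
  have heq' := heq (r ^ θ) hz (C * t) hτmem
  have i1 : r ^ (-θ) = (r ^ θ)⁻¹ := Real.rpow_neg hr.le θ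
  have i2 : r ^ (-(2 * θ)) = ((r ^ θ) ^ 2)⁻¹ := by
    rw [Real.rpow_neg hr.le]
    congr 1
    rw [pow_two, ← Real.rpow_add hr]
    congr 1
    ring
  have i3 : (r ^ θ) ^ ((σ₂ - σ₁ + δ * (p - 1)) / θ) = r ^ (σ₂ - σ₁ + δ * (p - 1)) := by
    rw [← Real.rpow_mul hr.le]
    congr 1
    field_simp
  have heq2 : C * deriv (fun τ' => w (r ^ θ) τ') (C * t) =
      θ ^ 2 * deriv (deriv (fun ζ => w ζ (C * t) ^ m)) (r ^ θ)
        + θ * (2 * m * δ + θ + N - 2) * r ^ (-θ) * deriv (fun ζ => w ζ (C * t) ^ m) (r ^ θ)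
        + m * δ * (m * δ + N - 2) * r ^ (-(2 * θ)) * w (r ^ θ) (C * t) ^ m
        + r ^ (σ₂ - σ₁ + δ * (p - 1)) * w (r ^ θ) (C * t) ^ p := by
    rw [heq', i1, i2, ← i3]
    ring
  have h0 : r ^ σ₁ * r ^ δ = r ^ (m * δ + 2 * θ - 2) :=
    rpow_add_eq hr (by linear_combination -hcomp)
  have eB : r ^ (m * δ + 2 * θ - 2) * r ^ (-θ) = r ^ (m * δ + θ - 2) :=
    rpow_add_eq hr (by ring)
  have eA : r ^ (m * δ + 2 * θ - 2) * r ^ (-(2 * θ)) = r ^ (m * δ - 2) :=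
    rpow_add_eq hr (by ring)
  have eP : r ^ (m * δ + 2 * θ - 2) * r ^ (σ₂ - σ₁ + δ * (p - 1)) = r ^ (σ₂ + δ * p) :=
    rpow_add_eq hr (by linear_combination hcomp)
  have eP2 : r ^ σ₂ * r ^ (δ * p) = r ^ (σ₂ + δ * p) := rpow_add_eq hr rfl
  have f5 : (r ^ δ * w (r ^ θ) (C * t)) ^ p = r ^ (δ * p) * w (r ^ θ) (C * t) ^ p := by
    rw [Real.mul_rpow (Real.rpow_nonneg hr.le δ) hW.le, ← Real.rpow_mul hr.le]
  have gA : r⁻¹ * r ^ (m * δ - 1) = r ^ (m * δ - 2) := by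
    rw [← Real.rpow_neg_one r]; exact rpow_add_eq hr (by ring)
  have gB : r⁻¹ * r ^ (m * δ + θ - 1) = r ^ (m * δ + θ - 2) := by
    rw [← Real.rpow_neg_one r]; exact rpow_add_eq hr (by ring)
  linear_combination (deriv (fun τ' => w (r ^ θ) τ') (C * t) * C) * h0
    + r ^ (m * δ + 2 * θ - 2) * heq2
    + θ * (2 * m * δ + θ + N - 2) * deriv (fun ζ => w ζ (C * t) ^ m) (r ^ θ) * eB
    + m * δ * (m * δ + N - 2) * w (r ^ θ) (C * t) ^ m * eA
    + w (r ^ θ) (C * t) ^ p * eP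
    - w (r ^ θ) (C * t) ^ p * eP2
    - r ^ σ₂ * f5
    - (N - 1) * m * δ * w (r ^ θ) (C * t) ^ m * gA
    - (N - 1) * θ * deriv (fun ζ => w ζ (C * t) ^ m) (r ^ θ) * gB
end
end

section
/- Let N, m, p, σ₁, σ₂ be real numbers with m > 0, σ₁ > -2 and σ₂ ≠ -2. Define θ := (σ₁+2)/2, N̄ := 2(N+σ₁)/(σ₁+2), σ := 2(σ₂-σ₁)/(σ₁+2), a := θ^{-2/(σ+2)} and C := θ^{2σ/(σ+2)}. Let T > 0 and suppose w : (0,∞) × (0,T) → (0,∞) is differentiable in time, s ↦ w(s,τ)^m is twice differentiable, and w satisfies ∂_τ w(s,τ) = ∂_ss(w^m)(s,τ) + ((N̄-1)/s) ∂_s(w^m)(s,τ) + s^{σ} w(s,τ)^p for all s > 0, τ ∈ (0,T). Then u(r,t) := w(a r^θ, C t) is a classical radial solution of (E)[N,m,p,σ₁,σ₂] on (0,∞) × (0, T/C). -/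
open Real Set

noncomputable section

private lemma key (N m p σ₁ σ₂ : ℝ) (hm : 0 < m) (hσ₁ : -2 < σ₁) (hσ₂ : σ₂ ≠ -2)
    (θ Nb σ a C T : ℝ)
    (hθ : θ = (σ₁ + 2) / 2) (hNb : Nb = 2 * (N + σ₁) / (σ₁ + 2))
    (hσ : σ = 2 * (σ₂ - σ₁) / (σ₁ + 2))
    (ha : a = θ ^ (-2 / (σ + 2))) (hC : C = θ ^ (2 * σ / (σ + 2))) (hT : 0 < T)
    (w : ℝ → ℝ → ℝ)
    (hpos : ∀ s : ℝ, 0 < s → ∀ τ ∈ Ioo (0:ℝ) T, 0 < w s τ)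
    (hdt : ∀ s : ℝ, 0 < s → ∀ τ ∈ Ioo (0:ℝ) T,
      DifferentiableAt ℝ (fun τ' => w s τ') τ)
    (hds : ∀ s : ℝ, 0 < s → ∀ τ ∈ Ioo (0:ℝ) T,
      DifferentiableAt ℝ (fun ζ => w ζ τ ^ m) s ∧
      DifferentiableAt ℝ (deriv (fun ζ => w ζ τ ^ m)) s)
    (heq : ∀ s : ℝ, 0 < s → ∀ τ ∈ Ioo (0:ℝ) T,
      deriv (fun τ' => w s τ') τ =
        deriv (deriv (fun ζ => w ζ τ ^ m)) s
          + ((Nb - 1) / s) * deriv (fun ζ => w ζ τ ^ m) s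
          + s ^ σ * w s τ ^ p) :
    ∀ r : ℝ, 0 < r → ∀ t ∈ Ioo (0:ℝ) (T / C),
    0 < w (a * r ^ θ) (C * t) ∧
    DifferentiableAt ℝ (fun τ => w (a * r ^ θ) (C * τ)) t ∧
    DifferentiableAt ℝ (fun ρ => w (a * ρ ^ θ) (C * t) ^ m) r ∧
    DifferentiableAt ℝ (deriv (fun ρ => w (a * ρ ^ θ) (C * t) ^ m)) r ∧
    r ^ σ₁ * deriv (fun τ => w (a * r ^ θ) (C * τ)) t =
      deriv (deriv (fun ρ => w (a * ρ ^ θ) (C * t) ^ m)) r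
        + ((N - 1) / r) * deriv (fun ρ => w (a * ρ ^ θ) (C * t) ^ m) r
        + r ^ σ₂ * w (a * r ^ θ) (C * t) ^ p := by
  have hσ₁2 : σ₁ + 2 ≠ 0 := by linarith
  have hθpos : 0 < θ := by rw [hθ]; linarith
  have hσ2 : σ + 2 ≠ 0 := by
    rw [hσ]
    intro h
    apply hσ₂
    field_simp at h
    linarith
  have hapos : 0 < a := ha ▸ Real.rpow_pos_of_pos hθpos _
  have hCpos : 0 < C := hC ▸ Real.rpow_pos_of_pos hθpos _
  have hC2 : C = a * a * (θ * θ) := by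
    rw [hC, ha, ← Real.rpow_add hθpos]
    have h2 : θ * θ = θ ^ (2:ℝ) := by
      rw [show (2:ℝ) = ((2:ℕ):ℝ) by norm_num, Real.rpow_natCast]; ring
    rw [h2, ← Real.rpow_add hθpos]
    congr 1
    field_simp
    ring
  have hCa : C * a ^ σ = 1 := by
    rw [hC, ha, ← Real.rpow_mul hθpos.le, ← Real.rpow_add hθpos,
      show 2 * σ / (σ + 2) + -2 / (σ + 2) * σ = 0 by field_simp; ring,
      Real.rpow_zero]
  have hθNb : θ * (Nb - 1) = N + θ - 2 := by
    rw [hθ, hNb]; field_simp; ring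
  have hθσ : θ * σ = σ₂ - σ₁ := by
    rw [hθ, hσ]; field_simp
  have hgr : ∀ ρ : ℝ, 0 < ρ → HasDerivAt (fun x : ℝ => a * x ^ θ) (a * (θ * ρ ^ (θ - 1))) ρ := by
    intro ρ hρ
    exact (Real.hasDerivAt_rpow_const (Or.inl hρ.ne')).const_mul a
  intro r hr t ht
  have hτ : C * t ∈ Ioo (0:ℝ) T := by
    constructor
    · exact mul_pos hCpos ht.1
    · calc C * t < C * (T / C) := by exact mul_lt_mul_of_pos_left ht.2 hCpos
        _ = T := by field_simp
  have hs : 0 < a * r ^ θ := mul_pos hapos (Real.rpow_pos_of_pos hr θ)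
  -- time derivative
  have htime : HasDerivAt (fun τ' => w (a * r ^ θ) (C * τ'))
      (deriv (fun x => w (a * r ^ θ) x) (C * t) * C) t := by
    have h1 := (hdt _ hs _ hτ).hasDerivAt
    have h2 : HasDerivAt (fun τ' : ℝ => C * τ') C t := by
      simpa using (hasDerivAt_id t).const_mul C
    exact h1.comp t h2
  -- space first derivative for all positive points
  have hFd : ∀ ρ : ℝ, 0 < ρ → HasDerivAt (fun x => w (a * x ^ θ) (C * t) ^ m)
      (deriv (fun ζ => w ζ (C * t) ^ m) (a * ρ ^ θ) * (a * (θ * ρ ^ (θ - 1)))) ρ := by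
    intro ρ hρ
    have hρs : 0 < a * ρ ^ θ := mul_pos hapos (Real.rpow_pos_of_pos hρ θ)
    exact ((hds _ hρs _ hτ).1.hasDerivAt).comp ρ (hgr ρ hρ)
  have heF : deriv (fun x => w (a * x ^ θ) (C * t) ^ m) =ᶠ[nhds r]
      (fun ρ => deriv (fun ζ => w ζ (C * t) ^ m) (a * ρ ^ θ) * (a * (θ * ρ ^ (θ - 1)))) := by
    filter_upwards [eventually_gt_nhds hr] with ρ hρ using (hFd ρ hρ).deriv
  -- second derivative data
  have h₁ : HasDerivAt (fun ρ => deriv (fun ζ => w ζ (C * t) ^ m) (a * ρ ^ θ))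
      (deriv (deriv (fun ζ => w ζ (C * t) ^ m)) (a * r ^ θ) * (a * (θ * r ^ (θ - 1)))) r :=
    by have := ((hds _ hs _ hτ).2.hasDerivAt).comp r (hgr r hr); exact this
  have h₂ : HasDerivAt (fun ρ : ℝ => a * (θ * ρ ^ (θ - 1)))
      (a * (θ * ((θ - 1) * r ^ (θ - 1 - 1)))) r :=
    (((Real.hasDerivAt_rpow_const (Or.inl hr.ne')).const_mul θ).const_mul a)
  have hG : HasDerivAt (fun ρ => deriv (fun ζ => w ζ (C * t) ^ m) (a * ρ ^ θ) * (a * (θ * ρ ^ (θ - 1)))) _ r := h₁.mul h₂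
  refine ⟨hpos _ hs _ hτ, htime.differentiableAt, (hFd r hr).differentiableAt, ?_, ?_⟩
  · exact (heF.differentiableAt_iff).mpr hG.differentiableAt
  · rw [htime.deriv, (hFd r hr).deriv, heF.deriv_eq, hG.deriv, heq _ hs _ hτ]
    set A := deriv (deriv (fun ζ => w ζ (C * t) ^ m)) (a * r ^ θ) with hA
    set B := deriv (fun ζ => w ζ (C * t) ^ m) (a * r ^ θ) with hB
    set W := w (a * r ^ θ) (C * t) with hW
    have e1 : r ^ σ₁ * C = (a * (θ * r ^ (θ - 1))) * (a * (θ * r ^ (θ - 1))) := by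
      have hrr : r ^ (θ - 1) * r ^ (θ - 1) = r ^ σ₁ := by
        rw [← Real.rpow_add hr]
        congr 1
        rw [hθ]; ring
      rw [hC2, ← hrr]; ring
    have hrθ : r ^ θ ≠ 0 := (Real.rpow_pos_of_pos hr θ).ne'
    have e2 : r ^ σ₁ * C * ((Nb - 1) / (a * r ^ θ)) =
        (a * (θ * ((θ - 1) * r ^ (θ - 1 - 1)))) + ((N - 1) / r) * (a * (θ * r ^ (θ - 1))) := by
      have h1 : r ^ σ₁ = r ^ (θ - 2) * r ^ θ := by
        rw [show σ₁ = (θ - 2) + θ by rw [hθ]; ring, Real.rpow_add hr]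
      have h2 : r ^ (θ - 1 - 1) = r ^ (θ - 2) := by rw [show θ - 1 - 1 = θ - 2 by ring]
      have h3 : r ^ (θ - 1) = r ^ (θ - 2) * r := by
        rw [show θ - 1 = (θ - 2) + 1 by ring, Real.rpow_add hr, Real.rpow_one]
      rw [h1, h2, h3, hC2]
      field_simp
      linear_combination hθNb
    have e3 : r ^ σ₁ * C * (a * r ^ θ) ^ σ = r ^ σ₂ := by
      rw [Real.mul_rpow hapos.le (Real.rpow_pos_of_pos hr θ).le, ← Real.rpow_mul hr.le, hθσ]
      calc r ^ σ₁ * C * (a ^ σ * r ^ (σ₂ - σ₁))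
          = (C * a ^ σ) * (r ^ σ₁ * r ^ (σ₂ - σ₁)) := by ring
        _ = r ^ σ₂ := by
            rw [hCa, ← Real.rpow_add hr, one_mul]
            congr 1; ring
    linear_combination A * e1 + B * e2 + W ^ p * e3


theorem statement1 (N m p σ₁ σ₂ : ℝ) (hm : 0 < m) (hσ₁ : -2 < σ₁) (hσ₂ : σ₂ ≠ -2)
    (θ Nb σ a C T : ℝ)
    (hθ : θ = (σ₁ + 2) / 2) (hNb : Nb = 2 * (N + σ₁) / (σ₁ + 2))
    (hσ : σ = 2 * (σ₂ - σ₁) / (σ₁ + 2))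
    (ha : a = θ ^ (-2 / (σ + 2))) (hC : C = θ ^ (2 * σ / (σ + 2))) (hT : 0 < T)
    (w : ℝ → ℝ → ℝ)
    (hpos : ∀ s : ℝ, 0 < s → ∀ τ ∈ Ioo (0:ℝ) T, 0 < w s τ)
    (hdt : ∀ s : ℝ, 0 < s → ∀ τ ∈ Ioo (0:ℝ) T,
      DifferentiableAt ℝ (fun τ' => w s τ') τ)
    (hds : ∀ s : ℝ, 0 < s → ∀ τ ∈ Ioo (0:ℝ) T,
      DifferentiableAt ℝ (fun ζ => w ζ τ ^ m) s ∧
      DifferentiableAt ℝ (deriv (fun ζ => w ζ τ ^ m)) s)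
    (heq : ∀ s : ℝ, 0 < s → ∀ τ ∈ Ioo (0:ℝ) T,
      deriv (fun τ' => w s τ') τ =
        deriv (deriv (fun ζ => w ζ τ ^ m)) s
          + ((Nb - 1) / s) * deriv (fun ζ => w ζ τ ^ m) s
          + s ^ σ * w s τ ^ p) :
    IsClassicalRadialSolution N m p σ₁ σ₂ (Ioo 0 (T / C))
      (fun r t => w (a * r ^ θ) (C * t)) := by
  intro r hr t ht
  exact key N m p σ₁ σ₂ hm hσ₁ hσ₂ θ Nb σ a C T hθ hNb hσ ha hC hT w hpos hdt hds heq r hr t ht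
end
end

section
/- Let N, m, p, σ₁, σ₂ be real numbers with m > 0 and m(N+σ₁) - N + 2 > 0. Define δ := -(N-2)/m, θ := (m(N+σ₁)-N+2)/(2m), N̄ := 2(m(σ₁+2)-N+2)/(m(σ₁+N)-N+2) and σ := -2(m(σ₁-σ₂)+(N-2)(p-1))/(m(σ₁+N)-N+2), and assume σ ≠ -2; set a := θ^{-2/(σ+2)} and C := θ^{2σ/(σ+2)}. Let T > 0 and suppose w : (0,∞) × (0,T) → (0,∞) is differentiable in time, s ↦ w(s,τ)^m is twice differentiable, and w satisfies ∂_τ w(s,τ) = ∂_ss(w^m)(s,τ) + ((N̄-1)/s) ∂_s(w^m)(s,τ) + s^{σ} w(s,τ)^p for all s > 0, τ ∈ (0,T). Then u(r,t) := r^δ w(a r^θ, C t) is a classical radial solution of (E)[N,m,p,σ₁,σ₂] on (0,∞) × (0, T/C). -/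
open Real Set

noncomputable section

set_option maxHeartbeats 2000000 in
theorem statement2 (N m p σ₁ σ₂ : ℝ) (hm : 0 < m)
    (hpos' : 0 < m * (N + σ₁) - N + 2)
    (δ θ Nb σ a C T : ℝ)
    (hδ : δ = -(N - 2) / m) (hθ : θ = (m * (N + σ₁) - N + 2) / (2 * m))
    (hNb : Nb = 2 * (m * (σ₁ + 2) - N + 2) / (m * (σ₁ + N) - N + 2))
    (hσ : σ = -2 * (m * (σ₁ - σ₂) + (N - 2) * (p - 1)) / (m * (σ₁ + N) - N + 2))
    (hσ2 : σ ≠ -2)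
    (ha : a = θ ^ (-2 / (σ + 2))) (hC : C = θ ^ (2 * σ / (σ + 2))) (hT : 0 < T)
    (w : ℝ → ℝ → ℝ)
    (hpos : ∀ s : ℝ, 0 < s → ∀ τ ∈ Ioo (0:ℝ) T, 0 < w s τ)
    (hdt : ∀ s : ℝ, 0 < s → ∀ τ ∈ Ioo (0:ℝ) T,
      DifferentiableAt ℝ (fun τ' => w s τ') τ)
    (hds : ∀ s : ℝ, 0 < s → ∀ τ ∈ Ioo (0:ℝ) T,
      DifferentiableAt ℝ (fun ζ => w ζ τ ^ m) s ∧
      DifferentiableAt ℝ (deriv (fun ζ => w ζ τ ^ m)) s)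
    (heq : ∀ s : ℝ, 0 < s → ∀ τ ∈ Ioo (0:ℝ) T,
      deriv (fun τ' => w s τ') τ =
        deriv (deriv (fun ζ => w ζ τ ^ m)) s
          + ((Nb - 1) / s) * deriv (fun ζ => w ζ τ ^ m) s
          + s ^ σ * w s τ ^ p) :
    IsClassicalRadialSolution N m p σ₁ σ₂ (Ioo 0 (T / C))
      (fun r t => r ^ δ * w (a * r ^ θ) (C * t)) := by
  have hm' : m ≠ 0 := ne_of_gt hm
  have hden : (0:ℝ) < m * (σ₁ + N) - N + 2 := by nlinarith [hpos']
  have hden' : m * (σ₁ + N) - N + 2 ≠ 0 := ne_of_gt hden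
  have hθpos : 0 < θ := by rw [hθ]; exact div_pos hpos' (by linarith)
  have hσ2' : σ + 2 ≠ 0 := fun h => hσ2 (by linarith)
  have hapos : 0 < a := by rw [ha]; exact Real.rpow_pos_of_pos hθpos _
  have hCpos : 0 < C := by rw [hC]; exact Real.rpow_pos_of_pos hθpos _
  have K1 : δ * m = -(N - 2) := by rw [hδ]; field_simp
  have K2 : σ₁ + δ = δ * m + 2 * θ - 2 := by rw [hδ, hθ]; field_simp; ring
  have K3 : θ * (Nb - 1) = 2 * (δ * m) + θ + N - 2 := by
    rw [hδ, hθ, hNb]; field_simp; ring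
  have K4 : σ₂ + δ * p = σ₁ + δ + θ * σ := by
    rw [hδ, hθ, hσ]; field_simp; ring
  have K5 : C = a ^ 2 * θ ^ 2 := by
    rw [hC, show 2*σ/(σ+2) = -2/(σ+2) + (-2/(σ+2)) + 1 + 1 from by field_simp; ring,
      Real.rpow_add hθpos, Real.rpow_add hθpos, Real.rpow_add hθpos, Real.rpow_one, ha]
    ring
  have K6 : C * a ^ σ = 1 := by
    rw [hC, ha, ← Real.rpow_mul hθpos.le, ← Real.rpow_add hθpos,
      show 2*σ/(σ+2) + -2/(σ+2)*σ = 0 from by field_simp; ring]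
    exact Real.rpow_zero θ
  have hAσ : a ^ σ = 1 / (a ^ 2 * θ ^ 2) := by
    rw [← K5]; field_simp; linarith [K6]
  intro r hr t ht
  dsimp only
  obtain ⟨ht0, htT⟩ := ht
  have hτ : C * t ∈ Ioo (0:ℝ) T :=
    ⟨mul_pos hCpos ht0, by rw [mul_comm]; exact (lt_div_iff₀ hCpos).mp htT⟩
  have hspos : ∀ ρ : ℝ, 0 < ρ → 0 < a * ρ ^ θ :=
    fun ρ hρ => mul_pos hapos (Real.rpow_pos_of_pos hρ θ)
  set s : ℝ := a * r ^ θ with hsdef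
  have hs : 0 < s := hspos r hr
  set v : ℝ → ℝ := fun ζ => w ζ (C * t) ^ m with hv
  -- time derivative
  have hwt0 : HasDerivAt (fun τ' => w s τ') (deriv (fun τ' => w s τ') (C * t)) (C * t) :=
    (hdt s hs (C * t) hτ).hasDerivAt
  have hCt : HasDerivAt (fun τ' : ℝ => C * τ') C t := by
    simpa using (hasDerivAt_id t).const_mul C
  have htime : HasDerivAt (fun τ' => r ^ δ * w s (C * τ'))
      (r ^ δ * (deriv (fun τ' => w s τ') (C * t) * C)) t :=
    (hwt0.comp t hCt).const_mul _
  -- space derivative setup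
  set F : ℝ → ℝ := fun ρ => ρ ^ (δ * m) * v (a * ρ ^ θ) with hF
  set G : ℝ → ℝ := fun ρ =>
    δ * m * ρ ^ (δ * m - 1) * v (a * ρ ^ θ)
      + ρ ^ (δ * m) * (deriv v (a * ρ ^ θ) * (a * (θ * ρ ^ (θ - 1)))) with hG
  have hinner : ∀ ρ : ℝ, ρ ≠ 0 →
      HasDerivAt (fun x : ℝ => a * x ^ θ) (a * (θ * ρ ^ (θ - 1))) ρ :=
    fun ρ hρ => (Real.hasDerivAt_rpow_const (Or.inl hρ)).const_mul a
  have hvcomp : ∀ ρ : ℝ, 0 < ρ →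
      HasDerivAt (fun x => v (a * x ^ θ)) (deriv v (a * ρ ^ θ) * (a * (θ * ρ ^ (θ - 1)))) ρ := by
    intro ρ hρ
    exact ((hds _ (hspos ρ hρ) _ hτ).1.hasDerivAt).comp ρ (hinner ρ hρ.ne')
  have hFd : ∀ ρ : ℝ, 0 < ρ → HasDerivAt F (G ρ) ρ := by
    intro ρ hρ
    exact (Real.hasDerivAt_rpow_const (Or.inl hρ.ne')).mul (hvcomp ρ hρ)
  have hfeq : ∀ ρ ∈ Ioi (0:ℝ),
      (fun x => (x ^ δ * w (a * x ^ θ) (C * t)) ^ m) ρ = F ρ := by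
    intro ρ hρ
    simp only [hF, hv]
    rw [Real.mul_rpow (Real.rpow_nonneg (le_of_lt hρ) δ) (hpos _ (hspos ρ hρ) _ hτ).le,
      ← Real.rpow_mul (le_of_lt hρ)]
  have hmemr : Ioi (0:ℝ) ∈ nhds r := isOpen_Ioi.mem_nhds hr
  have hfF : (fun x => (x ^ δ * w (a * x ^ θ) (C * t)) ^ m) =ᶠ[nhds r] F :=
    Filter.eventuallyEq_of_mem hmemr hfeq
  have hderivfG : ∀ ρ ∈ Ioi (0:ℝ),
      deriv (fun x => (x ^ δ * w (a * x ^ θ) (C * t)) ^ m) ρ = G ρ := by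
    intro ρ hρ
    have h1 : (fun x => (x ^ δ * w (a * x ^ θ) (C * t)) ^ m) =ᶠ[nhds ρ] F :=
      Filter.eventuallyEq_of_mem (isOpen_Ioi.mem_nhds hρ) hfeq
    rw [h1.deriv_eq, (hFd ρ hρ).deriv]
  have hdfG : deriv (fun x => (x ^ δ * w (a * x ^ θ) (C * t)) ^ m) =ᶠ[nhds r] G :=
    Filter.eventuallyEq_of_mem hmemr hderivfG
  -- second derivative of G
  have hV2 : HasDerivAt (deriv v) (deriv (deriv v) s) s := (hds s hs _ hτ).2.hasDerivAt
  have hdv : HasDerivAt (fun x => deriv v (a * x ^ θ))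
      (deriv (deriv v) s * (a * (θ * r ^ (θ - 1)))) r :=
    by have := hV2.comp r (hinner r hr.ne'); exact this
  have hB : HasDerivAt (fun ρ : ℝ => a * (θ * ρ ^ (θ - 1)))
      (a * (θ * ((θ - 1) * r ^ (θ - 1 - 1)))) r :=
    ((Real.hasDerivAt_rpow_const (Or.inl hr.ne')).const_mul θ).const_mul a
  have hT1 : HasDerivAt (fun ρ : ℝ => δ * m * ρ ^ (δ * m - 1) * v (a * ρ ^ θ))
      (δ * m * ((δ * m - 1) * r ^ (δ * m - 1 - 1)) * v s
        + δ * m * r ^ (δ * m - 1) * (deriv v s * (a * (θ * r ^ (θ - 1))))) r :=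
    ((Real.hasDerivAt_rpow_const (Or.inl hr.ne')).const_mul (δ * m)).mul (hvcomp r hr)
  have hT2 : HasDerivAt
      (fun ρ : ℝ => ρ ^ (δ * m) * (deriv v (a * ρ ^ θ) * (a * (θ * ρ ^ (θ - 1)))))
      (δ * m * r ^ (δ * m - 1) * (deriv v s * (a * (θ * r ^ (θ - 1))))
        + r ^ (δ * m) * (deriv (deriv v) s * (a * (θ * r ^ (θ - 1))) * (a * (θ * r ^ (θ - 1)))
            + deriv v s * (a * (θ * ((θ - 1) * r ^ (θ - 1 - 1)))))) r :=
    (Real.hasDerivAt_rpow_const (Or.inl hr.ne')).mul (hdv.mul hB)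
  have hGd : HasDerivAt G
      (δ * m * ((δ * m - 1) * r ^ (δ * m - 1 - 1)) * v s
        + δ * m * r ^ (δ * m - 1) * (deriv v s * (a * (θ * r ^ (θ - 1))))
        + (δ * m * r ^ (δ * m - 1) * (deriv v s * (a * (θ * r ^ (θ - 1))))
          + r ^ (δ * m) * (deriv (deriv v) s * (a * (θ * r ^ (θ - 1))) * (a * (θ * r ^ (θ - 1)))
              + deriv v s * (a * (θ * ((θ - 1) * r ^ (θ - 1 - 1))))))) r :=
    hT1.add hT2
  refine ⟨mul_pos (Real.rpow_pos_of_pos hr δ) (hpos s hs _ hτ),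
    htime.differentiableAt, (hfF.differentiableAt_iff).mpr (hFd r hr).differentiableAt,
    (hdfG.differentiableAt_iff).mpr hGd.differentiableAt, ?_⟩
  -- the equation
  have hwteq := heq s hs (C * t) hτ
  rw [← hv] at hwteq
  rw [htime.deriv, hwteq, hdfG.deriv_eq, hGd.deriv, hderivfG r (mem_Ioi.mpr hr), hG]
  simp only
  -- power rewrites
  have e1 : r ^ (δ * m - 1) = r ^ (δ * m) / r := by
    rw [Real.rpow_sub hr, Real.rpow_one]
  have e2 : r ^ (δ * m - 1 - 1) = r ^ (δ * m) / r / r := by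
    rw [Real.rpow_sub hr, Real.rpow_sub hr, Real.rpow_one]
  have e3 : r ^ (θ - 1) = r ^ θ / r := by rw [Real.rpow_sub hr, Real.rpow_one]
  have e4 : r ^ (θ - 1 - 1) = r ^ θ / r / r := by
    rw [Real.rpow_sub hr, Real.rpow_sub hr, Real.rpow_one]
  have hs1 : r ^ σ₁ = r ^ (δ * m) * r ^ θ * r ^ θ / r / r / r ^ δ := by
    rw [show σ₁ = δ * m + θ + θ - 1 - 1 - δ from by linarith [K2],
      Real.rpow_sub hr, Real.rpow_sub hr, Real.rpow_sub hr,
      Real.rpow_add hr, Real.rpow_add hr, Real.rpow_one]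
  have hs2 : r ^ σ₂ = r ^ (δ * m) * r ^ θ * r ^ θ * r ^ (θ * σ) / r / r / r ^ (δ * p) := by
    rw [show σ₂ = δ * m + θ + θ + θ * σ - 1 - 1 - δ * p from by linarith [K2, K4],
      Real.rpow_sub hr, Real.rpow_sub hr, Real.rpow_sub hr,
      Real.rpow_add hr, Real.rpow_add hr, Real.rpow_add hr, Real.rpow_one]
  have hsσ : s ^ σ = a ^ σ * r ^ (θ * σ) := by
    rw [hsdef, Real.mul_rpow hapos.le (Real.rpow_nonneg hr.le θ),
      ← Real.rpow_mul hr.le]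
  have hup : (r ^ δ * w s (C * t)) ^ p = r ^ (δ * p) * w s (C * t) ^ p := by
    rw [Real.mul_rpow (Real.rpow_nonneg hr.le δ) (hpos s hs _ hτ).le,
      ← Real.rpow_mul hr.le]
  have hNb1 : Nb - 1 = (2 * (δ * m) + θ + N - 2) / θ := by
    field_simp
    linarith [K3]
  have hN : N = 2 - δ * m := by linarith [K1]
  rw [e1, e2, e3, e4, hs1, hs2, hsσ, hup, hAσ, hsdef, hNb1, hN, K5]
  have h1 : r ^ (δ * m) ≠ 0 := (Real.rpow_pos_of_pos hr _).ne'
  have h2 : r ^ θ ≠ 0 := (Real.rpow_pos_of_pos hr _).ne'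
  have h3 : r ^ δ ≠ 0 := (Real.rpow_pos_of_pos hr _).ne'
  have h4 : r ^ (δ * p) ≠ 0 := (Real.rpow_pos_of_pos hr _).ne'
  have h5 : r ^ (θ * σ) ≠ 0 := (Real.rpow_pos_of_pos hr _).ne'
  field_simp
  ring
end
end

section
/- Let N, m, p, σ₁, σ₂ be real numbers with m > 1 and L(σ₁,σ₂) := σ₂(m-1) + 2(p-1) - σ₁(m-p) = 0, and set δ := (σ₁+2)/(m-1). Let I ⊆ ℝ be an open interval and let u be a classical radial solution of (E)[N,m,p,σ₁,σ₂] on (0,∞) × I. Then the function w(y,t) := e^{-δ y} u(e^{y}, t) satisfies, for all y ∈ ℝ and t ∈ I, the equation ∂_t w = ∂_yy(w^m) + ((mN - N + 2 + 2m(σ₁+1))/(m-1)) ∂_y(w^m) + (m(σ₁+2)(mN - N + 2 + mσ₁)/(m-1)²) w^m + w^p. -/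
open Real Set

noncomputable section

private lemma exp_rpow' (x s : ℝ) : Real.exp x ^ s = Real.exp (x * s) := by
  rw [Real.rpow_def_of_pos (Real.exp_pos x), Real.log_exp]

theorem statement3 (N m p σ₁ σ₂ : ℝ) (hm : 1 < m)
    (hL : σ₂ * (m - 1) + 2 * (p - 1) - σ₁ * (m - p) = 0)
    (δ : ℝ) (hδ : δ = (σ₁ + 2) / (m - 1))
    (I : Set ℝ) (hIopen : IsOpen I) (hIconn : I.OrdConnected)
    (u : ℝ → ℝ → ℝ)
    (hu : IsClassicalRadialSolution N m p σ₁ σ₂ I u) :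
    ∀ y : ℝ, ∀ t ∈ I,
      deriv (fun τ => Real.exp (-δ * y) * u (Real.exp y) τ) t =
        deriv (deriv (fun η => (Real.exp (-δ * η) * u (Real.exp η) t) ^ m)) y
          + ((m * N - N + 2 + 2 * m * (σ₁ + 1)) / (m - 1)) *
              deriv (fun η => (Real.exp (-δ * η) * u (Real.exp η) t) ^ m) y
          + (m * (σ₁ + 2) * (m * N - N + 2 + m * σ₁) / (m - 1) ^ 2) *
              (Real.exp (-δ * y) * u (Real.exp y) t) ^ m
          + (Real.exp (-δ * y) * u (Real.exp y) t) ^ p := by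
  have hm1 : m - 1 ≠ 0 := by linarith
  have hmδ : m * δ = δ + σ₁ + 2 := by rw [hδ]; field_simp; ring
  have hpδ : δ * (p - 1) = σ₁ - σ₂ := by rw [hδ]; field_simp; linear_combination hL
  intro y t ht
  -- the function v(ρ) = u(ρ,t)^m
  set v : ℝ → ℝ := fun ρ => u ρ t ^ m with hv
  have hupos : ∀ r : ℝ, 0 < r → 0 < u r t := fun r hr => (hu r hr t ht).1
  have hvd : ∀ r : ℝ, 0 < r → DifferentiableAt ℝ v r := fun r hr => (hu r hr t ht).2.2.1
  have hvd' : ∀ r : ℝ, 0 < r → DifferentiableAt ℝ (deriv v) r :=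
    fun r hr => (hu r hr t ht).2.2.2.1
  have htd : DifferentiableAt ℝ (fun τ => u (Real.exp y) τ) t :=
    (hu (Real.exp y) (Real.exp_pos y) t ht).2.1
  have pde := (hu (Real.exp y) (Real.exp_pos y) t ht).2.2.2.2
  rw [exp_rpow' y σ₁, exp_rpow' y σ₂] at pde
  -- rewrite w^m nicely
  have hgw : (fun η => (Real.exp (-δ * η) * u (Real.exp η) t) ^ m)
      = fun η => Real.exp (-(m * δ) * η) * v (Real.exp η) := by
    funext η
    rw [Real.mul_rpow (Real.exp_pos _).le (hupos _ (Real.exp_pos η)).le, exp_rpow',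
      show -δ * η * m = -(m * δ) * η by ring]
  -- exponential derivative
  have hE : ∀ η : ℝ, HasDerivAt (fun η : ℝ => Real.exp (-(m * δ) * η))
      (Real.exp (-(m * δ) * η) * -(m * δ)) η := by
    intro η
    have h1 : HasDerivAt (fun η : ℝ => -(m * δ) * η) (-(m * δ)) η := by
      simpa using (hasDerivAt_id η).const_mul (-(m * δ))
    exact h1.exp
  have hV : ∀ η : ℝ, HasDerivAt (fun η : ℝ => v (Real.exp η))
      (deriv v (Real.exp η) * Real.exp η) η := fun η =>
    ((hvd _ (Real.exp_pos η)).hasDerivAt).comp η (Real.hasDerivAt_exp η)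
  have hDg : ∀ η : ℝ, HasDerivAt (fun η : ℝ => Real.exp (-(m * δ) * η) * v (Real.exp η))
      (Real.exp (-(m * δ) * η) * -(m * δ) * v (Real.exp η)
        + Real.exp (-(m * δ) * η) * (deriv v (Real.exp η) * Real.exp η)) η :=
    fun η => (hE η).mul (hV η)
  have hderivg : deriv (fun η : ℝ => Real.exp (-(m * δ) * η) * v (Real.exp η))
      = fun η : ℝ => Real.exp (-(m * δ) * η) * -(m * δ) * v (Real.exp η)
        + Real.exp (-(m * δ) * η) * (deriv v (Real.exp η) * Real.exp η) :=
    funext fun η => (hDg η).deriv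
  have hV1 : HasDerivAt (fun η : ℝ => deriv v (Real.exp η))
      (deriv (deriv v) (Real.exp y) * Real.exp y) y :=
    ((hvd' _ (Real.exp_pos y)).hasDerivAt).comp y (Real.hasDerivAt_exp y)
  have hDG : HasDerivAt (fun η : ℝ => Real.exp (-(m * δ) * η) * -(m * δ) * v (Real.exp η)
        + Real.exp (-(m * δ) * η) * (deriv v (Real.exp η) * Real.exp η))
      ((Real.exp (-(m * δ) * y) * -(m * δ) * -(m * δ)) * v (Real.exp y)
          + (Real.exp (-(m * δ) * y) * -(m * δ)) * (deriv v (Real.exp y) * Real.exp y)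
        + ((Real.exp (-(m * δ) * y) * -(m * δ)) * (deriv v (Real.exp y) * Real.exp y)
          + Real.exp (-(m * δ) * y) *
            ((deriv (deriv v) (Real.exp y) * Real.exp y) * Real.exp y
              + deriv v (Real.exp y) * Real.exp y))) y :=
    (((hE y).mul_const (-(m * δ))).mul (hV y)).add
      ((hE y).mul (hV1.mul (Real.hasDerivAt_exp y)))
  -- rewrite the goal
  have hWm : (Real.exp (-δ * y) * u (Real.exp y) t) ^ m
      = Real.exp (-(m * δ) * y) * v (Real.exp y) := by
    rw [Real.mul_rpow (Real.exp_pos _).le (hupos _ (Real.exp_pos y)).le, exp_rpow',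
      show -δ * y * m = -(m * δ) * y by ring]
  have hWp : (Real.exp (-δ * y) * u (Real.exp y) t) ^ p
      = Real.exp (-δ * y * p) * u (Real.exp y) t ^ p :=
    by rw [Real.mul_rpow (Real.exp_pos _).le (hupos _ (Real.exp_pos y)).le, exp_rpow']
  have hA : Real.exp (-(m * δ) * y) * (Real.exp y * Real.exp y) * Real.exp (y * σ₁)
      = Real.exp (-δ * y) := by
    rw [← Real.exp_add, ← Real.exp_add, ← Real.exp_add, Real.exp_eq_exp]
    linear_combination (-y) * hmδ
  have hXP : Real.exp (-δ * y * p)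
      = Real.exp (y * σ₂) * (Real.exp (-(m * δ) * y) * (Real.exp y * Real.exp y)) := by
    rw [← Real.exp_add, ← Real.exp_add, ← Real.exp_add, Real.exp_eq_exp]
    linear_combination y * hmδ - y * hpδ
  rw [hgw, deriv_const_mul _ htd, (hDg y).deriv, hderivg, hDG.deriv, hWm, hWp, hXP, ← hA]
  -- denominator-free form of the PDE
  have pde2 : Real.exp (y * σ₁) * deriv (fun τ => u (Real.exp y) τ) t * Real.exp y
      = deriv (deriv v) (Real.exp y) * Real.exp y + (N - 1) * deriv v (Real.exp y)
        + Real.exp (y * σ₂) * u (Real.exp y) t ^ p * Real.exp y := by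
    field_simp at pde
    linear_combination pde
  have hc1 : 1 - 2 * (m * δ) + (m * N - N + 2 + 2 * m * (σ₁ + 1)) / (m - 1) = N - 1 := by
    rw [hδ]; field_simp; ring
  have hc2 : m * δ * (m * δ)
      - (m * N - N + 2 + 2 * m * (σ₁ + 1)) / (m - 1) * (m * δ)
      + m * (σ₁ + 2) * (m * N - N + 2 + m * σ₁) / (m - 1) ^ 2 = 0 := by
    rw [hδ]; field_simp; ring
  refine mul_left_cancel₀ (Real.exp_ne_zero (y * σ₁)) ?_
  linear_combination (Real.exp (-(m * δ) * y) * Real.exp y * Real.exp (y * σ₁)) * pde2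
    - (Real.exp (y * σ₁) * Real.exp (-(m * δ) * y) * Real.exp y * deriv v (Real.exp y)) * hc1
    - (Real.exp (y * σ₁) * Real.exp (-(m * δ) * y) * v (Real.exp y)) * hc2
end
end

section
/- Let m > 1 and set σ := √(2(m+1)), A := (m-1)/(2m(m+1)), B := (m-1)²/(m(σ+2)(mσ+m+1)), α := (σ+2)/(σ(m-1)), β := 1/σ, and let T > 0. Define, for s > 0 and τ < T with A - B s^{σ}(T-τ) > 0, the function w(s,τ) := (T-τ)^{-α} ξ^{2/(m-1)} (A - B ξ^{σ})^{1/(m-1)} where ξ := s(T-τ)^{β}. Then w satisfies ∂_τ w(s,τ) = ∂_ss(w^m)(s,τ) + s^{σ} w(s,τ) at every such point; that is, w is an explicit backward self-similar solution of the one-dimensional weighted reaction-diffusion equation ∂_τ w = ∂_ss(w^m) + s^{σ} w (the case p = 1, N̄ = 1, σ = √(2(m+1)) of the weighted equation). -/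
open Real

noncomputable section

/-- The explicit backward self-similar solution
`w(s,τ) = (T-τ)^{-α} ξ^{2/(m-1)} (A - B ξ^{σ})^{1/(m-1)}`, `ξ = s(T-τ)^{β}`,
with `σ = √(2(m+1))`, solves the one-dimensional weighted equation
`∂_τ w = ∂_ss(w^m) + s^{σ} w` (the case `p = 1`, `N̄ = 1`) wherever
`s > 0`, `τ < T` and `A - B s^{σ}(T-τ) > 0`. -/
theorem statement13 (m : ℝ) (hm : 1 < m)
    (σ A B α β T : ℝ) (hσ : σ = Real.sqrt (2 * (m + 1)))
    (hA : A = (m - 1) / (2 * m * (m + 1)))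
    (hB : B = (m - 1) ^ 2 / (m * (σ + 2) * (m * σ + m + 1)))
    (hα : α = (σ + 2) / (σ * (m - 1))) (hβ : β = 1 / σ) (hT : 0 < T)
    (w : ℝ → ℝ → ℝ)
    (hw : ∀ s τ : ℝ, w s τ =
      (T - τ) ^ (-α) * (s * (T - τ) ^ β) ^ (2 / (m - 1)) *
        (A - B * (s * (T - τ) ^ β) ^ σ) ^ (1 / (m - 1))) :
    ∀ s : ℝ, 0 < s → ∀ τ : ℝ, τ < T → 0 < A - B * s ^ σ * (T - τ) →
      deriv (fun τ' => w s τ') τ =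
        deriv (deriv (fun s' => w s' τ ^ m)) s + s ^ σ * w s τ := by
  intro s hs τ hτ hu0
  have hm1 : (0:ℝ) < m - 1 := by linarith
  have hm1' : m - 1 ≠ 0 := ne_of_gt hm1
  have hm0 : (0:ℝ) < m := by linarith
  have ht : (0:ℝ) < T - τ := by linarith
  have hσpos : 0 < σ := by
    rw [hσ]; exact Real.sqrt_pos.mpr (by linarith)
  have hσ2 : σ * σ = 2 * (m + 1) := by
    rw [hσ]; exact Real.mul_self_sqrt (by linarith)
  set k : ℝ := 1 / (m - 1) with hk
  have hk' : k * (m - 1) = 1 := by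
    rw [hk]; field_simp
  have hA' : A * (2 * m * (m + 1)) = m - 1 := by
    rw [hA]; field_simp
  have hB' : B * (m * (σ + 2) * (m * σ + m + 1)) = (m - 1) ^ 2 := by
    rw [hB]
    have h1 : m * (σ + 2) * (m * σ + m + 1) ≠ 0 := by positivity
    field_simp
  have hkm : k * m = k + 1 := by linear_combination hk'
  -- pointwise closed form
  have hwf : ∀ x τ' : ℝ, 0 < x → τ' < T →
      w x τ' = (T - τ') ^ (-k) * (x ^ (2 * k) * (A - B * x ^ σ * (T - τ')) ^ k) := by
    intro x τ' hx hτ'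
    have ht' : (0:ℝ) < T - τ' := by linarith
    have hb : (0:ℝ) ≤ (T - τ') ^ β := Real.rpow_nonneg ht'.le β
    have e1 : (x * (T - τ') ^ β) ^ (2 / (m - 1))
        = x ^ (2 * k) * (T - τ') ^ (β * (2 / (m - 1))) := by
      rw [Real.mul_rpow hx.le hb, ← Real.rpow_mul ht'.le,
        show 2 / (m - 1) = 2 * k by rw [hk]; ring]
    have e2 : (x * (T - τ') ^ β) ^ σ = x ^ σ * (T - τ') := by
      rw [Real.mul_rpow hx.le hb, ← Real.rpow_mul ht'.le,
        show β * σ = 1 by rw [hβ]; field_simp, Real.rpow_one]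
    have e3 : (T - τ') ^ (-α) * (T - τ') ^ (β * (2 / (m - 1))) = (T - τ') ^ (-k) := by
      rw [← Real.rpow_add ht']
      congr 1
      rw [hα, hβ, hk]
      field_simp
      ring
    rw [hw, e1, e2, ← mul_assoc B]
    calc (T - τ') ^ (-α) * (x ^ (2 * k) * (T - τ') ^ (β * (2 / (m - 1)))) *
          (A - B * x ^ σ * (T - τ')) ^ k
        = ((T - τ') ^ (-α) * (T - τ') ^ (β * (2 / (m - 1)))) *
            (x ^ (2 * k) * (A - B * x ^ σ * (T - τ')) ^ k) := by ring
      _ = (T - τ') ^ (-k) * (x ^ (2 * k) * (A - B * x ^ σ * (T - τ')) ^ k) := by rw [e3]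
  -- time derivative
  have htd : HasDerivAt (fun τ' : ℝ => T - τ') (-1) τ := by
    simpa using (hasDerivAt_id τ).const_sub T
  have hF1 : HasDerivAt (fun τ' : ℝ => (T - τ') ^ (-k))
      (-1 * -k * (T - τ) ^ (-k - 1)) τ := htd.rpow_const (Or.inl ht.ne')
  have hu' : HasDerivAt (fun τ' : ℝ => A - B * s ^ σ * (T - τ')) (B * s ^ σ) τ := by
    have h := (htd.const_mul (B * s ^ σ)).const_sub A
    simpa using h
  have hF2 : HasDerivAt (fun τ' : ℝ => (A - B * s ^ σ * (T - τ')) ^ k)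
      (B * s ^ σ * k * (A - B * s ^ σ * (T - τ)) ^ (k - 1)) τ :=
    hu'.rpow_const (Or.inl hu0.ne')
  have hF : HasDerivAt
      (fun τ' : ℝ => (T - τ') ^ (-k) * (s ^ (2 * k) * (A - B * s ^ σ * (T - τ')) ^ k))
      (-1 * -k * (T - τ) ^ (-k - 1) * (s ^ (2 * k) * (A - B * s ^ σ * (T - τ)) ^ k)
        + (T - τ) ^ (-k) *
          (s ^ (2 * k) * (B * s ^ σ * k * (A - B * s ^ σ * (T - τ)) ^ (k - 1)))) τ :=
    hF1.mul (hF2.const_mul (s ^ (2 * k)))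
  have hτeq : deriv (fun τ' => w s τ') τ =
      -1 * -k * (T - τ) ^ (-k - 1) * (s ^ (2 * k) * (A - B * s ^ σ * (T - τ)) ^ k)
        + (T - τ) ^ (-k) *
          (s ^ (2 * k) * (B * s ^ σ * k * (A - B * s ^ σ * (T - τ)) ^ (k - 1))) := by
    have hev : (fun τ' => w s τ') =ᶠ[nhds τ]
        (fun τ' => (T - τ') ^ (-k) * (s ^ (2 * k) * (A - B * s ^ σ * (T - τ')) ^ k)) := by
      filter_upwards [Iio_mem_nhds hτ] with τ' hτ' using hwf s τ' hs hτ'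
    rw [hev.deriv_eq]
    exact hF.deriv
  -- the open set where things are nice
  have hcont : Continuous fun x : ℝ => A - B * x ^ σ * (T - τ) := by
    have h1 : Continuous fun x : ℝ => x ^ σ := by
      rw [continuous_iff_continuousAt]
      intro x
      exact Real.continuousAt_rpow_const x σ (Or.inr hσpos.le)
    exact continuous_const.sub ((continuous_const.mul h1).mul continuous_const)
  have hUopen : IsOpen {x : ℝ | 0 < x ∧ 0 < A - B * x ^ σ * (T - τ)} :=
    (isOpen_lt continuous_const continuous_id).inter (isOpen_lt continuous_const hcont)
  have hUmem : s ∈ {x : ℝ | 0 < x ∧ 0 < A - B * x ^ σ * (T - τ)} := ⟨hs, hu0⟩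
  -- generic derivative helper
  have hΦ : ∀ e1 e2 x : ℝ, 0 < x → 0 < A - B * x ^ σ * (T - τ) →
      HasDerivAt (fun y : ℝ => y ^ e1 * (A - B * y ^ σ * (T - τ)) ^ e2)
        (e1 * (x ^ (e1 - 1) * (A - B * x ^ σ * (T - τ)) ^ e2)
          - B * σ * (T - τ) * e2 *
            (x ^ (e1 + σ - 1) * (A - B * x ^ σ * (T - τ)) ^ (e2 - 1))) x := by
    intro e1 e2 x hx hux
    have h1 : HasDerivAt (fun y : ℝ => y ^ σ) (σ * x ^ (σ - 1)) x :=
      Real.hasDerivAt_rpow_const (Or.inl hx.ne')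
    have h2 : HasDerivAt (fun y : ℝ => A - B * y ^ σ * (T - τ))
        (-(B * (σ * x ^ (σ - 1)) * (T - τ))) x :=
      ((h1.const_mul B).mul_const (T - τ)).const_sub A
    have h3 := h2.rpow_const (p := e2) (Or.inl hux.ne')
    have h0 : HasDerivAt (fun y : ℝ => y ^ e1) (e1 * x ^ (e1 - 1)) x :=
      Real.hasDerivAt_rpow_const (Or.inl hx.ne')
    have h4 := h0.mul h3
    refine h4.congr_deriv ?_
    rw [show e1 + σ - 1 = e1 + (σ - 1) by ring, Real.rpow_add hx]
    ring
  -- closed form for w^m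
  have hwm : ∀ x : ℝ, x ∈ {x : ℝ | 0 < x ∧ 0 < A - B * x ^ σ * (T - τ)} →
      w x τ ^ m = (T - τ) ^ (-(k + 1)) *
        (x ^ (2 * k + 2) * (A - B * x ^ σ * (T - τ)) ^ (k + 1)) := by
    intro x hxU
    obtain ⟨hx, hux⟩ := hxU
    rw [hwf x τ hx hτ]
    rw [Real.mul_rpow (Real.rpow_nonneg ht.le _)
        (mul_nonneg (Real.rpow_nonneg hx.le _) (Real.rpow_nonneg hux.le _)),
      Real.mul_rpow (Real.rpow_nonneg hx.le _) (Real.rpow_nonneg hux.le _),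
      ← Real.rpow_mul ht.le, ← Real.rpow_mul hx.le, ← Real.rpow_mul hux.le,
      show -k * m = -(k + 1) by linear_combination (-1 : ℝ) * hk',
      show 2 * k * m = 2 * k + 2 by linear_combination (2 : ℝ) * hk',
      show k * m = k + 1 by linear_combination hk']
  -- first spatial derivative
  have hG : ∀ x ∈ {x : ℝ | 0 < x ∧ 0 < A - B * x ^ σ * (T - τ)},
      HasDerivAt (fun y => w y τ ^ m)
        ((T - τ) ^ (-(k + 1)) *
          ((2 * k + 2) * (x ^ (2 * k + 1) * (A - B * x ^ σ * (T - τ)) ^ (k + 1))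
            - B * σ * (T - τ) * (k + 1) *
              (x ^ (2 * k + 1 + σ) * (A - B * x ^ σ * (T - τ)) ^ k))) x := by
    intro x hxU
    have h0 := (hΦ (2 * k + 2) (k + 1) x hxU.1 hxU.2).const_mul ((T - τ) ^ (-(k + 1)))
    have heq : (fun y => w y τ ^ m) =ᶠ[nhds x]
        (fun y => (T - τ) ^ (-(k + 1)) *
          (y ^ (2 * k + 2) * (A - B * y ^ σ * (T - τ)) ^ (k + 1))) := by
      filter_upwards [hUopen.mem_nhds hxU] with y hy using hwm y hy
    have h0' := h0.congr_of_eventuallyEq heq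
    refine h0'.congr_deriv ?_
    rw [show 2 * k + 1 = 2 * k + 2 - 1 by ring]
    rw [show k + 1 - 1 = k by ring]
    rw [show 2 * k + 2 - 1 + σ = 2 * k + 2 + σ - 1 by ring]
  have hd1 : ∀ x ∈ {x : ℝ | 0 < x ∧ 0 < A - B * x ^ σ * (T - τ)},
      deriv (fun y => w y τ ^ m) x =
        (T - τ) ^ (-(k + 1)) *
          ((2 * k + 2) * (x ^ (2 * k + 1) * (A - B * x ^ σ * (T - τ)) ^ (k + 1))
            - B * σ * (T - τ) * (k + 1) *
              (x ^ (2 * k + 1 + σ) * (A - B * x ^ σ * (T - τ)) ^ k)) :=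
    fun x hx => (hG x hx).deriv
  have hev2 : deriv (fun y => w y τ ^ m) =ᶠ[nhds s]
      (fun x => (T - τ) ^ (-(k + 1)) *
        ((2 * k + 2) * (x ^ (2 * k + 1) * (A - B * x ^ σ * (T - τ)) ^ (k + 1))
          - B * σ * (T - τ) * (k + 1) *
            (x ^ (2 * k + 1 + σ) * (A - B * x ^ σ * (T - τ)) ^ k))) := by
    filter_upwards [hUopen.mem_nhds hUmem] with x hx using hd1 x hx
  have hE1 := (hΦ (2 * k + 1) (k + 1) s hs hu0).const_mul (2 * k + 2)
  have hE2 := (hΦ (2 * k + 1 + σ) k s hs hu0).const_mul (B * σ * (T - τ) * (k + 1))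
  have hE := (hE1.sub hE2).const_mul ((T - τ) ^ (-(k + 1)))
  have hseq : deriv (deriv (fun s' => w s' τ ^ m)) s =
      (T - τ) ^ (-(k + 1)) *
        ((2 * k + 2) *
            ((2 * k + 1) * (s ^ (2 * k + 1 - 1) * (A - B * s ^ σ * (T - τ)) ^ (k + 1))
              - B * σ * (T - τ) * (k + 1) *
                (s ^ (2 * k + 1 + σ - 1) * (A - B * s ^ σ * (T - τ)) ^ (k + 1 - 1)))
          - B * σ * (T - τ) * (k + 1) *
            ((2 * k + 1 + σ) *
                (s ^ (2 * k + 1 + σ - 1) * (A - B * s ^ σ * (T - τ)) ^ k)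
              - B * σ * (T - τ) * k *
                (s ^ (2 * k + 1 + σ + σ - 1) * (A - B * s ^ σ * (T - τ)) ^ (k - 1)))) := by
    rw [hev2.deriv_eq]
    exact hE.deriv
  rw [hτeq, hseq, hwf s τ hs hτ]
  -- normalize the rpow atoms
  rw [show (2 : ℝ) * k + 1 - 1 = 2 * k by ring]
  rw [show (2 : ℝ) * k + 1 + σ - 1 = 2 * k + σ by ring]
  rw [show (2 : ℝ) * k + 1 + σ + σ - 1 = 2 * k + σ + σ by ring]
  rw [show (k : ℝ) + 1 - 1 = k by ring]
  rw [show (-k - 1 : ℝ) = -(k + 1) by ring]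
  have rt : (T - τ) ^ (-k) = (T - τ) ^ (-(k + 1)) * (T - τ) := by
    conv_lhs => rw [show (-k : ℝ) = -(k + 1) + 1 by ring]
    rw [Real.rpow_add ht, Real.rpow_one]
  rw [rt]
  rw [Real.rpow_add hs (2 * k + σ) σ, Real.rpow_add hs (2 * k) σ]
  have ru1 : (A - B * s ^ σ * (T - τ)) ^ (k + 1)
      = (A - B * s ^ σ * (T - τ)) ^ (k - 1) * (A - B * s ^ σ * (T - τ)) *
          (A - B * s ^ σ * (T - τ)) := by
    conv_lhs => rw [show (k : ℝ) + 1 = k - 1 + 1 + 1 by ring]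
    rw [Real.rpow_add_one hu0.ne', Real.rpow_add_one hu0.ne']
  have ru : (A - B * s ^ σ * (T - τ)) ^ k
      = (A - B * s ^ σ * (T - τ)) ^ (k - 1) * (A - B * s ^ σ * (T - τ)) := by
    conv_lhs => rw [show (k : ℝ) = k - 1 + 1 by ring]
    rw [Real.rpow_add_one hu0.ne']
  rw [ru1, ru]
  linear_combination
    ((T - τ) ^ (-(k + 1)) * s ^ (2 * k) * (A - B * s ^ σ * (T - τ)) ^ (k - 1) *
        (-A * (2 * A * (-(k * m) - 2 * k - 1) + k)
          + s ^ σ * (T - τ) * A *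
              (B * (σ * (-3 * k * m - 4 * k - 3) - 2 * k * m ^ 2 - (6 * k + 2) * m - 8 * k - 6)
                + k * (m - 1) + 1)
          - s ^ σ * s ^ σ * (T - τ) * (T - τ) * B *
              (B * (σ * (-3 * k * m - 4 * k - 3) - 2 * k * m ^ 2 - (6 * k + 2) * m - 6 * k - 4)
                + k * (m - 1) + 1))) * hk'
    + ((T - τ) ^ (-(k + 1)) * s ^ (2 * k) * (A - B * s ^ σ * (T - τ)) ^ (k - 1) *
        (-A * k ^ 2)) * hA'
    + ((T - τ) ^ (-(k + 1)) * s ^ (2 * k) * (A - B * s ^ σ * (T - τ)) ^ (k - 1) *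
        (s ^ σ * (T - τ) * A * k ^ 2 - s ^ σ * s ^ σ * (T - τ) * (T - τ) * B * k ^ 2)) * hB'
    + ((T - τ) ^ (-(k + 1)) * s ^ (2 * k) * (A - B * s ^ σ * (T - τ)) ^ (k - 1) *
        (s ^ σ * (T - τ) * A * B * ((k + 1) - k ^ 2 * m ^ 2)
          - s ^ σ * s ^ σ * (T - τ) * (T - τ) * B * B * ((k + 1) ^ 2 - k ^ 2 * m ^ 2))) * hσ2
end
end

section
/- Let m > 1 and σ₁ > -2, and set N := 2 + m(σ₁+2)/(m+1) and σ₂ := σ₁ + m√(2(m+1))(σ₁+2)/(m+1). Then there exist positive constants A and B such that for every T > 0 the function u(r,t) := (T-t)^{-1/(m-1)} r^{(σ₁+2)/(m-1)} (A - B(T-t) r^{σ₂-σ₁})^{1/(m-1)}, defined on the set of (r,t) with r > 0, 0 < t < T and A - B(T-t) r^{σ₂-σ₁} > 0, satisfies r^{σ₁} ∂_t u(r,t) = ∂_rr(u^m)(r,t) + ((N-1)/r) ∂_r(u^m)(r,t) + r^{σ₂} u(r,t) at every such point; that is, u is an explicit blow-up solution of (E)[N,m,1,σ₁,σ₂] (the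 case p = 1). -/
open Real

noncomputable section

private lemma rsg (x e a b : ℝ) (hx : 0 < x) (h : e = a + b) :
    x ^ e = x ^ a * x ^ b := by rw [h, Real.rpow_add hx]

private lemma rs2 (x e a : ℝ) (hx : 0 < x) (h : e = a + 1) :
    x ^ e = x ^ a * x := by
  rw [h, Real.rpow_add hx, Real.rpow_one]

private lemma rs3 (x e a b : ℝ) (hx : 0 < x) (h : e = a + b + 1) :
    x ^ e = x ^ a * x ^ b * x := by
  rw [h, Real.rpow_add hx, Real.rpow_add hx, Real.rpow_one]

private lemma rs3g (x e a b c : ℝ) (hx : 0 < x) (h : e = a + b + c) :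
    x ^ e = x ^ a * x ^ b * x ^ c := by
  rw [h, Real.rpow_add hx, Real.rpow_add hx]

private lemma rs4 (x e a b c : ℝ) (hx : 0 < x) (h : e = a + b + c + 1) :
    x ^ e = x ^ a * x ^ b * x ^ c * x := by
  rw [h, Real.rpow_add hx, Real.rpow_add hx, Real.rpow_add hx, Real.rpow_one]

private lemma rsFF (x e a : ℝ) (hx : 0 < x) (h : e = a + 1 + 1) :
    x ^ e = x ^ a * x * x := by
  rw [h, Real.rpow_add hx, Real.rpow_add hx, Real.rpow_one]

private lemma rsdiv (x e a : ℝ) (hx : 0 < x) (h : e = a - 1) :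
    x ^ e = x ^ a / x := by
  rw [h, Real.rpow_sub hx, Real.rpow_one]

private lemma cancel_aux (a r z : ℝ) (hr : r ≠ 0) : a / r * (r * z) = a * z := by
  field_simp

private lemma aux_deriv (C A D pp qq w x : ℝ) (hx : 0 < x) (hF : A - D * x ^ qq ≠ 0) :
    HasDerivAt (fun ρ : ℝ => C * ρ ^ pp * (A - D * ρ ^ qq) ^ w)
      (C * (pp * x ^ (pp - 1)) * (A - D * x ^ qq) ^ w
        + C * x ^ pp * (-(D * (qq * x ^ (qq - 1))) * w * (A - D * x ^ qq) ^ (w - 1))) x := by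
  have h1 : HasDerivAt (fun ρ : ℝ => ρ ^ pp) (pp * x ^ (pp - 1)) x :=
    Real.hasDerivAt_rpow_const (Or.inl hx.ne')
  have h2 : HasDerivAt (fun ρ : ℝ => ρ ^ qq) (qq * x ^ (qq - 1)) x :=
    Real.hasDerivAt_rpow_const (Or.inl hx.ne')
  have h3 : HasDerivAt (fun ρ : ℝ => A - D * ρ ^ qq) (-(D * (qq * x ^ (qq - 1)))) x :=
    (h2.const_mul D).const_sub A
  have h4 : HasDerivAt (fun ρ : ℝ => (A - D * ρ ^ qq) ^ w)
      (-(D * (qq * x ^ (qq - 1))) * w * (A - D * x ^ qq) ^ (w - 1)) x :=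
    h3.rpow_const (Or.inl hF)
  exact (h1.const_mul C).mul h4

private lemma pointwise (α p w K N q A B Y : ℝ)
    (hw : w = α + 1)
    (hK : K = p + N - 2)
    (h1 : α = p * K * A)
    (h2 : B * (p * K + q * w * (K + p + q) + α * w * q ^ 2) = 1)
    (h3 : p * K = α * w * q ^ 2) :
    α * A =
      p * (p - 1) * (A - B * Y) ^ 2
        - p * w * q * (B * Y) * (A - B * Y)
        - w * q * (p + q - 1) * (B * Y) * (A - B * Y)
        + w * (w - 1) * q ^ 2 * (B * Y) ^ 2
        + (N - 1) * (p * (A - B * Y) ^ 2 - w * q * (B * Y) * (A - B * Y))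
        + Y * (A - B * Y) := by
  subst hw
  subst hK
  linear_combination A * h1 + (A * Y - B * Y ^ 2) * h2 + (A * B * Y) * h3

/-- For `m > 1`, `σ₁ > -2`, `N = 2 + m(σ₁+2)/(m+1)` and
`σ₂ = σ₁ + m√(2(m+1))(σ₁+2)/(m+1)`, there exist positive constants `A`, `B` such that
for every `T > 0` the explicit function
`u(r,t) = (T-t)^{-1/(m-1)} r^{(σ₁+2)/(m-1)} (A - B(T-t) r^{σ₂-σ₁})^{1/(m-1)}`
satisfies `r^{σ₁} ∂_t u = ∂_rr(u^m) + ((N-1)/r) ∂_r(u^m) + r^{σ₂} u`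
wherever `r > 0`, `0 < t < T` and `A - B(T-t) r^{σ₂-σ₁} > 0`. -/
theorem statement14 (m σ₁ N σ₂ : ℝ) (hm : 1 < m) (hσ₁ : -2 < σ₁)
    (hN : N = 2 + m * (σ₁ + 2) / (m + 1))
    (hσ₂ : σ₂ = σ₁ + m * Real.sqrt (2 * (m + 1)) * (σ₁ + 2) / (m + 1)) :
    ∃ A B : ℝ, 0 < A ∧ 0 < B ∧ ∀ T : ℝ, 0 < T →
      ∀ u : ℝ → ℝ → ℝ,
        (∀ r t : ℝ, u r t =
          (T - t) ^ (-(1 / (m - 1))) * r ^ ((σ₁ + 2) / (m - 1)) *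
            (A - B * (T - t) * r ^ (σ₂ - σ₁)) ^ (1 / (m - 1))) →
        ∀ r : ℝ, 0 < r → ∀ t : ℝ, 0 < t → t < T →
          0 < A - B * (T - t) * r ^ (σ₂ - σ₁) →
          r ^ σ₁ * deriv (fun τ => u r τ) t =
            deriv (deriv (fun ρ => u ρ t ^ m)) r
              + ((N - 1) / r) * deriv (fun ρ => u ρ t ^ m) r
              + r ^ σ₂ * u r t := by
  have hm1 : (0:ℝ) < m - 1 := by linarith
  have hm1n : m - 1 ≠ 0 := ne_of_gt hm1
  have hm0 : (0:ℝ) < m := by linarith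
  have hmp1 : (0:ℝ) < m + 1 := by linarith
  have hmp1n : m + 1 ≠ 0 := ne_of_gt hmp1
  have hσ : (0:ℝ) < σ₁ + 2 := by linarith
  set α : ℝ := 1 / (m - 1) with hαdef
  set β : ℝ := (σ₁ + 2) / (m - 1) with hβdef
  set q : ℝ := σ₂ - σ₁ with hqdef
  have hα : 0 < α := by rw [hαdef]; exact div_pos one_pos hm1
  have hβp : 0 < β := by rw [hβdef]; exact div_pos hσ hm1
  have hsq2 : Real.sqrt (2 * (m + 1)) ^ 2 = 2 * (m + 1) := Real.sq_sqrt (by linarith)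
  have hsqpos : 0 < Real.sqrt (2 * (m + 1)) := Real.sqrt_pos.mpr (by linarith)
  have hqval : q = m * Real.sqrt (2 * (m + 1)) * (σ₁ + 2) / (m + 1) := by
    rw [hqdef, hσ₂]; ring
  have hq : 0 < q := by rw [hqval]; positivity
  have hq2 : (m + 1) * q ^ 2 = 2 * m ^ 2 * (σ₁ + 2) ^ 2 := by
    have e : q * (m + 1) = m * Real.sqrt (2 * (m + 1)) * (σ₁ + 2) := by
      rw [hqval]; field_simp
    have e2 : (q * (m + 1)) ^ 2 = (m * Real.sqrt (2 * (m + 1)) * (σ₁ + 2)) ^ 2 := by rw [e]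
    have e3 : (m + 1) * ((m + 1) * q ^ 2) = (m + 1) * (2 * m ^ 2 * (σ₁ + 2) ^ 2) := by
      linear_combination e2 + (m ^ 2 * (σ₁ + 2) ^ 2) * hsq2
    exact mul_left_cancel₀ hmp1n e3
  have hw : α * m = α + 1 := by
    rw [hαdef]; field_simp; ring
  have hβm : β * (m - 1) = σ₁ + 2 := by
    rw [hβdef]; field_simp
  have hαm : α * (m - 1) = 1 := by
    rw [hαdef]; field_simp
  have hNm : (N - 2) * (m + 1) = m * (σ₁ + 2) := by
    rw [hN]; field_simp; ring
  have hKpos : 0 < β * m + N - 2 := by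
    have e : β * m + N - 2 = β * m + m * (σ₁ + 2) / (m + 1) := by rw [hN]; ring
    rw [e]
    have : 0 < m * (σ₁ + 2) / (m + 1) := by positivity
    nlinarith [mul_pos hβp hm0]
  set A : ℝ := α / (β * m * (β * m + N - 2)) with hAdef
  set B : ℝ := (β * m * (β * m + N - 2) + q * (α * m) * (β * m + N - 2 + β * m + q)
      + α * (α * m) * q ^ 2)⁻¹ with hBdef
  have hbr : 0 < β * m * (β * m + N - 2) + q * (α * m) * (β * m + N - 2 + β * m + q)
      + α * (α * m) * q ^ 2 := by
    have hb1 : 0 < β * m * (β * m + N - 2) := mul_pos (mul_pos hβp hm0) hKpos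
    have hb2 : 0 < q * (α * m) * (β * m + N - 2 + β * m + q) :=
      mul_pos (mul_pos hq (mul_pos hα hm0))
        (by nlinarith [mul_pos hβp hm0])
    have hb3 : 0 < α * (α * m) * q ^ 2 :=
      mul_pos (mul_pos hα (mul_pos hα hm0)) (by positivity)
    linarith
  have hApos : 0 < A := by
    rw [hAdef]; exact div_pos hα (mul_pos (mul_pos hβp hm0) hKpos)
  have hBpos : 0 < B := by rw [hBdef]; exact inv_pos.mpr hbr
  have h1 : α = β * m * (β * m + N - 2) * A := by
    have hne : β * m * (β * m + N - 2) ≠ 0 := ne_of_gt (mul_pos (mul_pos hβp hm0) hKpos)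
    rw [hAdef]
    field_simp
  have h2 : B * (β * m * (β * m + N - 2) + q * (α * m) * (β * m + N - 2 + β * m + q)
      + α * (α * m) * q ^ 2) = 1 := by
    rw [hBdef]; exact inv_mul_cancel₀ (ne_of_gt hbr)
  have h3 : β * m * (β * m + N - 2) = α * (α * m) * q ^ 2 := by
    have P : β * m * (β * m + N - 2) * ((m - 1) ^ 2 * (m + 1))
        = α * (α * m) * q ^ 2 * ((m - 1) ^ 2 * (m + 1)) := by
      linear_combination
        (m ^ 2 * (m + 1) * (σ₁ + 2) + m * (m - 1) * (m + 1) * (β * m + N - 2)) * hβm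
          + (m * (m - 1) * (σ₁ + 2)) * hNm
          + (-(m * q ^ 2 * (m + 1) * (α * (m - 1) + 1))) * hαm
          + (-m) * hq2
    have hne : ((m - 1) ^ 2 * (m + 1)) ≠ 0 := by positivity
    exact mul_right_cancel₀ hne P
  refine ⟨A, B, hApos, hBpos, ?_⟩
  intro T hT u hu r hr t ht htT hFpos
  have hs : 0 < T - t := sub_pos.mpr htT
  have hF : 0 < A - B * (T - t) * r ^ q := hFpos
  have hfun : (fun τ => u r τ)
      = fun τ => (T - τ) ^ (-α) * r ^ β * (A - B * (T - τ) * r ^ q) ^ α :=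
    funext fun τ => hu r τ
  -- time derivative
  have hTt : HasDerivAt (fun τ : ℝ => T - τ) (-1) t := by
    simpa using (hasDerivAt_id t).const_sub T
  have hd2 : HasDerivAt (fun τ : ℝ => (T - τ) ^ (-α))
      ((-1) * (-α) * (T - t) ^ (-α - 1)) t :=
    hTt.rpow_const (Or.inl hs.ne')
  have hd3 : HasDerivAt (fun τ : ℝ => A - B * (T - τ) * r ^ q) (-(B * -1 * r ^ q)) t :=
    ((hTt.const_mul B).mul_const (r ^ q)).const_sub A
  have hd4 : HasDerivAt (fun τ : ℝ => (A - B * (T - τ) * r ^ q) ^ α)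
      (-(B * -1 * r ^ q) * α * (A - B * (T - t) * r ^ q) ^ (α - 1)) t :=
    hd3.rpow_const (Or.inl hF.ne')
  have hd5 : HasDerivAt
      (fun τ : ℝ => (T - τ) ^ (-α) * r ^ β * (A - B * (T - τ) * r ^ q) ^ α)
      (((-1) * (-α) * (T - t) ^ (-α - 1) * r ^ β) * ((A - B * (T - t) * r ^ q) ^ α)
        + ((T - t) ^ (-α) * r ^ β)
          * (-(B * -1 * r ^ q) * α * (A - B * (T - t) * r ^ q) ^ (α - 1))) t :=
    (hd2.mul_const (r ^ β)).mul hd4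
  have hsa : (T - t) ^ (-α) = (T - t) ^ (-α - 1) * (T - t) :=
    rs2 (T - t) (-α) (-α - 1) hs (by ring)
  have hFd : (A - B * (T - t) * r ^ q) ^ α
      = (A - B * (T - t) * r ^ q) ^ (α - 1) * (A - B * (T - t) * r ^ q) :=
    rs2 _ α (α - 1) hF (by ring)
  have hDT : deriv (fun τ => u r τ) t
      = α * (T - t) ^ (-α - 1) * r ^ β
          * ((A - B * (T - t) * r ^ q) ^ (α - 1)) * (A - B * (T - t) * r ^ q)
        + α * B * (T - t) ^ (-α - 1) * (T - t) * r ^ β * r ^ q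
          * ((A - B * (T - t) * r ^ q) ^ (α - 1)) := by
    rw [hfun, hd5.deriv, hsa, hFd]; ring
  -- spatial derivatives
  have hev : ∀ᶠ ρ in nhds r, 0 < ρ ∧ 0 < A - B * (T - t) * ρ ^ q := by
    have hcq : ContinuousAt (fun ρ : ℝ => ρ ^ q) r :=
      Real.continuousAt_rpow_const r q (Or.inl hr.ne')
    have hc : ContinuousAt (fun ρ : ℝ => A - B * (T - t) * ρ ^ q) r :=
      continuousAt_const.sub (continuousAt_const.mul hcq)
    exact (eventually_gt_nhds hr).and (hc.eventually (eventually_gt_nhds hF))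
  have hg : (fun ρ => u ρ t ^ m)
      =ᶠ[nhds r] fun ρ : ℝ =>
        (T - t) ^ (-α - 1) * ρ ^ (β * m) * (A - B * (T - t) * ρ ^ q) ^ (α * m) := by
    filter_upwards [hev] with ρ hρ
    obtain ⟨hρ0, hρF⟩ := hρ
    rw [hu ρ t,
      Real.mul_rpow (mul_nonneg (Real.rpow_nonneg hs.le _) (Real.rpow_nonneg hρ0.le _))
        (Real.rpow_nonneg hρF.le _),
      Real.mul_rpow (Real.rpow_nonneg hs.le _) (Real.rpow_nonneg hρ0.le _),
      ← Real.rpow_mul hs.le, ← Real.rpow_mul hρ0.le, ← Real.rpow_mul hρF.le]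
    rw [show -α * m = -α - 1 by rw [hαdef]; field_simp; try ring]
  have hg1 : deriv (fun ρ : ℝ =>
        (T - t) ^ (-α - 1) * ρ ^ (β * m) * (A - B * (T - t) * ρ ^ q) ^ (α * m))
      =ᶠ[nhds r] fun ρ : ℝ =>
        (T - t) ^ (-α - 1) * (β * m) * ρ ^ (β * m - 1) * (A - B * (T - t) * ρ ^ q) ^ (α * m)
          - (T - t) ^ (-α - 1) * (α * m) * (B * (T - t)) * q * ρ ^ (β * m + (q - 1))
            * (A - B * (T - t) * ρ ^ q) ^ (α * m - 1) := by
    filter_upwards [hev] with ρ hρ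
    obtain ⟨hρ0, hρF⟩ := hρ
    rw [(aux_deriv ((T - t) ^ (-α - 1)) A (B * (T - t)) (β * m) q (α * m) ρ hρ0 hρF.ne').deriv,
      rsg ρ (β * m + (q - 1)) (β * m) (q - 1) hρ0 rfl]
    ring
  have hgtot : deriv (fun ρ => u ρ t ^ m) =ᶠ[nhds r] (fun ρ : ℝ =>
        (T - t) ^ (-α - 1) * (β * m) * ρ ^ (β * m - 1) * (A - B * (T - t) * ρ ^ q) ^ (α * m)
          - (T - t) ^ (-α - 1) * (α * m) * (B * (T - t)) * q * ρ ^ (β * m + (q - 1))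
            * (A - B * (T - t) * ρ ^ q) ^ (α * m - 1)) :=
    hg.symm.deriv.symm.trans hg1
  have er1 : r ^ (β * m - 1) = r ^ β * r ^ σ₁ * r :=
    rs3 r (β * m - 1) β σ₁ hr (by rw [hβdef]; field_simp; try ring)
  have er2 : r ^ (β * m - 1 - 1) = r ^ β * r ^ σ₁ :=
    rsg r (β * m - 1 - 1) β σ₁ hr (by rw [hβdef]; field_simp; try ring)
  have er3 : r ^ (β * m + (q - 1)) = r ^ β * r ^ σ₁ * r ^ q * r :=
    rs4 r _ β σ₁ q hr (by rw [hβdef]; field_simp; try ring)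
  have er4 : r ^ (β * m + (q - 1) - 1) = r ^ β * r ^ σ₁ * r ^ q :=
    rs3g r _ β σ₁ q hr (by rw [hβdef]; field_simp; try ring)
  have er5 : r ^ (q - 1) = r ^ q / r := rsdiv r _ q hr (by ring)
  have er6 : r ^ σ₂ = r ^ σ₁ * r ^ q := rsg r σ₂ σ₁ q hr (by rw [hqdef]; ring)
  have eF1 : (A - B * (T - t) * r ^ q) ^ (α * m)
      = (A - B * (T - t) * r ^ q) ^ (α - 1) * (A - B * (T - t) * r ^ q)
          * (A - B * (T - t) * r ^ q) :=
    rsFF _ _ (α - 1) hF (by rw [hαdef]; field_simp; try ring)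
  have eF2 : (A - B * (T - t) * r ^ q) ^ (α * m - 1)
      = (A - B * (T - t) * r ^ q) ^ (α - 1) * (A - B * (T - t) * r ^ q) :=
    rs2 _ _ (α - 1) hF (by rw [hαdef]; field_simp; try ring)
  have eF3 : (A - B * (T - t) * r ^ q) ^ (α * m - 1 - 1)
      = (A - B * (T - t) * r ^ q) ^ (α - 1) := by
    rw [show α * m - 1 - 1 = α - 1 by rw [hαdef]; field_simp; try ring]
  have hD1 : deriv (fun ρ => u ρ t ^ m) r
      = r * ((T - t) ^ (-α - 1) * (β * m) * (r ^ β * r ^ σ₁)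
            * ((A - B * (T - t) * r ^ q) ^ (α - 1) * (A - B * (T - t) * r ^ q)
                * (A - B * (T - t) * r ^ q))
          - (T - t) ^ (-α - 1) * (α * m) * B * (T - t) * q * (r ^ β * r ^ σ₁ * r ^ q)
            * ((A - B * (T - t) * r ^ q) ^ (α - 1) * (A - B * (T - t) * r ^ q))) := by
    rw [hgtot.eq_of_nhds, er1, er3, eF1, eF2]; ring
  have haux1 := aux_deriv ((T - t) ^ (-α - 1) * (β * m)) A (B * (T - t)) (β * m - 1) q
      (α * m) r hr hF.ne'
  have haux2 := aux_deriv ((T - t) ^ (-α - 1) * (α * m) * (B * (T - t)) * q) A (B * (T - t))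
      (β * m + (q - 1)) q (α * m - 1) r hr hF.ne'
  have hD2 : deriv (deriv (fun ρ => u ρ t ^ m)) r
      = (T - t) ^ (-α - 1) * (β * m) * (β * m - 1) * (r ^ β * r ^ σ₁)
          * ((A - B * (T - t) * r ^ q) ^ (α - 1) * (A - B * (T - t) * r ^ q)
              * (A - B * (T - t) * r ^ q))
        - (T - t) ^ (-α - 1) * (β * m) * (α * m) * B * (T - t) * q
            * (r ^ β * r ^ σ₁ * r ^ q)
            * ((A - B * (T - t) * r ^ q) ^ (α - 1) * (A - B * (T - t) * r ^ q))
        - (T - t) ^ (-α - 1) * (α * m) * B * (T - t) * q * (β * m + q - 1)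
            * (r ^ β * r ^ σ₁ * r ^ q)
            * ((A - B * (T - t) * r ^ q) ^ (α - 1) * (A - B * (T - t) * r ^ q))
        + (T - t) ^ (-α - 1) * (α * m) * (α * m - 1) * B ^ 2 * (T - t) ^ 2 * q ^ 2
            * (r ^ β * r ^ σ₁ * r ^ q * r ^ q)
            * (A - B * (T - t) * r ^ q) ^ (α - 1) := by
    erw [hgtot.deriv_eq, (haux1.sub haux2).deriv]; rw [er1, er2, er3, er4, er5, eF1, eF2, eF3]
    field_simp
    ring
  have key := pointwise α (β * m) (α * m) (β * m + N - 2) N q A B ((T - t) * r ^ q)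
    hw rfl h1 h2 h3
  rw [hDT, hD2, hD1, cancel_aux (N - 1) r _ hr.ne', hu r t, hsa, hFd, er6]
  linear_combination ((T - t) ^ (-α - 1) * r ^ β * r ^ σ₁
      * (A - B * (T - t) * r ^ q) ^ (α - 1)) * key
end
end

section
/- Let N, p, σ₂ be real numbers with p > 1, let c > 0, and set K := N - 2 - 2(σ₂+2)/(p-1) and λ := ((σ₂+2)/(p-1))·(N - 2 - (σ₂+2)/(p-1)). Let f : ℝ → (0,∞) be twice differentiable satisfying the traveling-wave equation f''(y) - c f'(y) - λ f(y) + f(y)^p = 0 for all y ∈ ℝ. Then the function u(r,t) := r^{-(σ₂+2)/(p-1)} f(ln r + (K+c)t) is a classical radial solution of (E)[N,1,p,-2,σ₂] on (0,∞) × ℝ, i.e. it satisfies r^{-2} ∂_t u = ∂_rr u + ((N-1)/r) ∂_r u + r^{σ₂} u^p for all r > 0 and t ∈ ℝ. -/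
open Real Set

noncomputable section

theorem statement16 (N p σ₂ c : ℝ) (hp : 1 < p) (hc : 0 < c)
    (K lam : ℝ) (hK : K = N - 2 - 2 * (σ₂ + 2) / (p - 1))
    (hlam : lam = ((σ₂ + 2) / (p - 1)) * (N - 2 - (σ₂ + 2) / (p - 1)))
    (f : ℝ → ℝ) (hfpos : ∀ y : ℝ, 0 < f y)
    (hfd : Differentiable ℝ f) (hfd2 : Differentiable ℝ (deriv f))
    (hfeq : ∀ y : ℝ, deriv (deriv f) y - c * deriv f y - lam * f y + f y ^ p = 0) :
    IsClassicalRadialSolution N 1 p (-2) σ₂ Set.univ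
      (fun r t => r ^ (-(σ₂ + 2) / (p - 1)) * f (Real.log r + (K + c) * t)) := by
  have hp1 : p - 1 ≠ 0 := by linarith
  intro r hr t _
  simp only [Real.rpow_one]
  set α := -(σ₂ + 2) / (p - 1) with hα
  set b := K + c with hb
  have hrne : r ≠ 0 := ne_of_gt hr
  set y := Real.log r + b * t with hy
  have hK' : K = N - 2 + 2 * α := by rw [hK, hα]; ring
  have hlam' : lam = -α * (N - 2 + α) := by rw [hlam, hα]; ring
  -- time derivative
  have hlin : HasDerivAt (fun τ => Real.log r + b * τ) b t := by
    simpa using ((hasDerivAt_id t).const_mul b).const_add (Real.log r)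
  have ht : HasDerivAt (fun τ => r ^ α * f (Real.log r + b * τ))
      (r ^ α * (deriv f y * b)) t := by
    have := ((hfd y).hasDerivAt.comp t hlin).const_mul (r ^ α)
    simpa [Function.comp_def, hy] using this
  -- space derivative at any ρ > 0
  have hder : ∀ ρ : ℝ, 0 < ρ →
      HasDerivAt (fun x => x ^ α * f (Real.log x + b * t))
        (ρ ^ (α - 1) * (α * f (Real.log ρ + b * t) + deriv f (Real.log ρ + b * t))) ρ := by
    intro ρ hρ
    have hpow : HasDerivAt (fun x : ℝ => x ^ α) (α * ρ ^ (α - 1)) ρ :=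
      Real.hasDerivAt_rpow_const (Or.inl hρ.ne')
    have hlog : HasDerivAt (fun x => Real.log x + b * t) ρ⁻¹ ρ :=
      (Real.hasDerivAt_log hρ.ne').add_const _
    have hcomp : HasDerivAt (fun x => f (Real.log x + b * t))
        (deriv f (Real.log ρ + b * t) * ρ⁻¹) ρ := by
      have := (hfd (Real.log ρ + b * t)).hasDerivAt.comp ρ hlog
      simpa [Function.comp_def] using this
    have h := hpow.mul hcomp
    refine h.congr_deriv ?_
    rw [show α - 1 = α + (-1 : ℝ) from by ring, Real.rpow_add hρ,
      Real.rpow_neg_one]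
    field_simp
  -- second derivative
  have hc1 : HasDerivAt (fun x => f (Real.log x + b * t)) (deriv f y * r⁻¹) r := by
    have := (hfd y).hasDerivAt.comp r ((Real.hasDerivAt_log hrne).add_const (b * t))
    simpa [Function.comp_def, hy] using this
  have hc2 : HasDerivAt (fun x => deriv f (Real.log x + b * t))
      (deriv (deriv f) y * r⁻¹) r := by
    have := (hfd2 y).hasDerivAt.comp r ((Real.hasDerivAt_log hrne).add_const (b * t))
    simpa [Function.comp_def, hy] using this
  have hφ : HasDerivAt
      (fun x => x ^ (α - 1) * (α * f (Real.log x + b * t) + deriv f (Real.log x + b * t)))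
      (r ^ (α - 2) * (α * (α - 1) * f y + (2 * α - 1) * deriv f y + deriv (deriv f) y)) r := by
    have hpow : HasDerivAt (fun x : ℝ => x ^ (α - 1)) ((α - 1) * r ^ (α - 1 - 1)) r :=
      Real.hasDerivAt_rpow_const (Or.inl hrne)
    have h := hpow.mul ((hc1.const_mul α).add hc2)
    refine h.congr_deriv ?_
    simp only [Pi.add_apply, ← hy]
    rw [show α - 1 - 1 = α - 2 from by ring,
      show α - 1 = α - 2 + (1 : ℝ) from by ring, Real.rpow_add hr, Real.rpow_one]
    field_simp
    ring
  have heq : deriv (fun x => x ^ α * f (Real.log x + b * t))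
      =ᶠ[nhds r] fun x => x ^ (α - 1) *
        (α * f (Real.log x + b * t) + deriv f (Real.log x + b * t)) := by
    filter_upwards [eventually_gt_nhds hr] with x hx
    exact (hder x hx).deriv
  refine ⟨mul_pos (Real.rpow_pos_of_pos hr α) (hfpos y), ht.differentiableAt,
    (hder r hr).differentiableAt, hφ.differentiableAt.congr_of_eventuallyEq heq, ?_⟩
  have e1 : deriv (fun τ => r ^ α * f (Real.log r + b * τ)) t = r ^ α * (deriv f y * b) :=
    ht.deriv
  have e2 : deriv (fun x => x ^ α * f (Real.log x + b * t)) r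
      = r ^ (α - 1) * (α * f y + deriv f y) := (hder r hr).deriv
  have e3 : deriv (deriv (fun x => x ^ α * f (Real.log x + b * t))) r
      = r ^ (α - 2) * (α * (α - 1) * f y + (2 * α - 1) * deriv f y + deriv (deriv f) y) :=
    heq.deriv_eq.trans hφ.deriv
  rw [e1, e2, e3]
  have hrp : r ^ σ₂ * (r ^ α * f y) ^ p = r ^ (α - 2) * f y ^ p := by
    rw [Real.mul_rpow (Real.rpow_nonneg hr.le α) (hfpos y).le,
      ← Real.rpow_mul hr.le, ← mul_assoc, ← Real.rpow_add hr,
      show σ₂ + α * p = α - 2 from by rw [hα]; field_simp; ring]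
  rw [hrp]
  have hl : r ^ (-2 : ℝ) * (r ^ α * (deriv f y * b)) = r ^ (α - 2) * (deriv f y * b) := by
    rw [← mul_assoc, ← Real.rpow_add hr, show (-2 : ℝ) + α = α - 2 from by ring]
  have hm : (N - 1) / r * (r ^ (α - 1) * (α * f y + deriv f y))
      = r ^ (α - 2) * ((N - 1) * (α * f y + deriv f y)) := by
    rw [show α - 1 = α - 2 + (1 : ℝ) from by ring, Real.rpow_add hr, Real.rpow_one]
    field_simp
  rw [hl, hm, ← mul_add, ← mul_add]
  congr 1
  linear_combination (-1) * hfeq y + deriv f y * hb + deriv f y * hK' - f y * hlam'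
end
end
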